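/- arXiv:2405.02617 — 4 statements merged into one kernel-verified Lean document; each statement's English description precedes it below -/
import Mathlib

section
/- If a univariate real polynomial F(x) = Σᵢ₌₀ᵈ aᵢxⁱ with all coefficients positive is real-rooted (all its complex roots are real), then its coefficient sequence is log-concave: aⱼ² ≥ aⱼ₋₁·aⱼ₊₁ for all 1 ≤ j ≤ d−1. -/
open Polynomial

private lemma key_lemma (c : ℝ) (hc : 0 < c) :
    ∀ (s : Multiset ℝ), (∀ r ∈ s, 0 < r) →
      (∀ i ≤ Multiset.card s, 0 < (C c * (s.map fun r => X + C r).prod).coeff i) ∧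
      (∀ i, Multiset.card s < i → (C c * (s.map fun r => X + C r).prod).coeff i = 0) ∧
      (∀ j : ℕ, 1 ≤ j →
        (C c * (s.map fun r => X + C r).prod).coeff (j - 1) *
          (C c * (s.map fun r => X + C r).prod).coeff (j + 1) ≤
        (C c * (s.map fun r => X + C r).prod).coeff j ^ 2) := by
  intro s
  induction s using Multiset.induction_on with
  | empty =>
      intro _
      refine ⟨?_, ?_, ?_⟩
      · intro i hi
        simp only [Multiset.card_zero, Nat.le_zero] at hi
        simp [hi, hc]
      · intro i hi
        simp only [Multiset.card_zero] at hi
        simp [coeff_C, hi.ne']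
      · intro j hj
        have h1 : (C c * (Multiset.map (fun r => X + C r) 0).prod).coeff (j + 1) = 0 := by
          simp [coeff_C]
        rw [h1, mul_zero]
        positivity
  | cons r t ih =>
      intro hs
      obtain ⟨h1, h2, h3⟩ := ih fun x hx => hs x (Multiset.mem_cons_of_mem hx)
      have hr : 0 < r := hs r (Multiset.mem_cons_self r t)
      set Q := C c * (t.map fun x => X + C x).prod with hQ
      have hP : C c * ((r ::ₘ t).map fun x => X + C x).prod = (X + C r) * Q := by
        rw [Multiset.map_cons, Multiset.prod_cons, hQ]; ring
      have hnn : ∀ i, 0 ≤ Q.coeff i := by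
        intro i
        rcases le_or_gt i (Multiset.card t) with h | h
        · exact (h1 i h).le
        · exact (h2 i h).ge
      have hcoeff : ∀ n : ℕ, ((X + C r) * Q).coeff n =
          (if n = 0 then 0 else Q.coeff (n - 1)) + r * Q.coeff n := by
        intro n
        rw [add_mul, coeff_add, coeff_C_mul]
        cases n with
        | zero => simp [mul_coeff_zero]
        | succ m => simp [coeff_X_mul]
      rw [hP]
      refine ⟨?_, ?_, ?_⟩
      · intro i hi
        rw [Multiset.card_cons] at hi
        rw [hcoeff]
        cases i with
        | zero => simpa using mul_pos hr (h1 0 (Nat.zero_le _))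
        | succ m =>
            have hm : m ≤ Multiset.card t := by omega
            rw [if_neg (Nat.succ_ne_zero m), Nat.succ_sub_one]
            have h4 := mul_nonneg hr.le (hnn (m + 1))
            linarith [h1 m hm]
      · intro i hi
        rw [Multiset.card_cons] at hi
        rw [hcoeff]
        have hi0 : i ≠ 0 := by omega
        rw [if_neg hi0, h2 (i - 1) (by omega), h2 i (by omega), mul_zero, add_zero]
      · intro j hj
        rcases Nat.lt_or_ge j 2 with hj2 | hj2
        · -- j = 1
          have hj1 : j = 1 := by omega
          subst hj1
          rw [hcoeff 0, hcoeff 1, hcoeff 2]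
          simp only [if_pos rfl, if_neg (by norm_num : (1:ℕ) ≠ 0),
            if_neg (by norm_num : (2:ℕ) ≠ 0), zero_add]
          norm_num
          have i0 := h3 1 le_rfl
          norm_num at i0
          nlinarith [mul_le_mul_of_nonneg_left i0 (mul_nonneg hr.le hr.le),
            mul_nonneg (mul_nonneg hr.le (hnn 0)) (hnn 1), sq_nonneg (Q.coeff 0)]
        · obtain ⟨k, rfl⟩ : ∃ k, j = k + 2 := ⟨j - 2, by omega⟩
          have e1 : k + 2 - 1 = k + 1 := by omega
          have e4 : k + 3 - 1 = k + 2 := by omega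
          rw [e1, hcoeff (k+1), hcoeff (k+2), hcoeff (k+3)]
          rw [if_neg (Nat.succ_ne_zero _), if_neg (Nat.succ_ne_zero _),
            if_neg (Nat.succ_ne_zero _), e1, e4, Nat.succ_sub_one]
          have i1 := h3 (k + 1) (by omega)
          have i2 := h3 (k + 2) (by omega)
          rw [Nat.succ_sub_one] at i1
          rw [e1] at i2
          have hmid : Q.coeff k * Q.coeff (k + 3) ≤ Q.coeff (k + 1) * Q.coeff (k + 2) := by
            rcases eq_or_lt_of_le (hnn (k + 3)) with h0 | h0
            · rw [← h0, mul_zero]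
              exact mul_nonneg (hnn _) (hnn _)
            · have hk3 : k + 3 ≤ Multiset.card t := by
                by_contra hcon
                exact absurd (h2 (k + 3) (by omega)) h0.ne'
              have p1 : 0 < Q.coeff (k + 1) := h1 _ (by omega)
              have p2 : 0 < Q.coeff (k + 2) := h1 _ (by omega)
              nlinarith [mul_le_mul i1 i2 (mul_nonneg (hnn _) (hnn _)) (sq_nonneg _),
                mul_pos p1 p2, hnn k, h0.le]
          nlinarith [i1, mul_le_mul_of_nonneg_left hmid hr.le,
            mul_le_mul_of_nonneg_left i2 (mul_nonneg hr.le hr.le),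
            mul_nonneg hr.le (mul_nonneg (hnn (k+1)) (hnn (k+2)))]

/-- Newton's inequality: if a real polynomial `F = Σ_{i=0}^d aᵢ xⁱ` of degree `d`
with all coefficients positive is real-rooted (all complex roots are real), then its coefficient
sequence is log-concave: `a_j² ≥ a_{j-1}·a_{j+1}` for all `1 ≤ j ≤ d-1`. -/
theorem realRooted_logConcave (F : Polynomial ℝ) (d : ℕ) (hd : F.natDegree = d)
    (hpos : ∀ i ≤ d, 0 < F.coeff i)
    (hroots : ∀ z : ℂ, Polynomial.aeval z F = 0 → z.im = 0) :
    ∀ j : ℕ, 1 ≤ j → j ≤ d - 1 →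
      F.coeff (j - 1) * F.coeff (j + 1) ≤ (F.coeff j) ^ 2 := by
  have hF0 : F ≠ 0 := by
    intro h
    have := hpos 0 (Nat.zero_le d)
    rw [h] at this
    simp at this
  have hsplits : Splits F := by
    refine Splits.of_splits_map (algebraMap ℝ ℂ) (IsAlgClosed.splits _) ?_
    intro a ha
    have haev : Polynomial.aeval a F = 0 := by
      have := isRoot_of_mem_roots ha
      rwa [IsRoot, eval_map, ← aeval_def] at this
    have him := hroots a haev
    exact ⟨a.re, by apply Complex.ext <;> simp [him]⟩
  have hfac : F = C F.leadingCoeff * (F.roots.map fun a => X - C a).prod :=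
    hsplits.eq_prod_roots
  have hneg : ∀ a ∈ F.roots, a < 0 := by
    intro a ha
    by_contra hcon
    push_neg at hcon
    have heval : F.eval a = 0 := isRoot_of_mem_roots ha
    have hpos' : 0 < F.eval a := by
      rw [eval_eq_sum_range]
      apply Finset.sum_pos'
      · intro i hi
        rw [Finset.mem_range, hd] at hi
        exact mul_nonneg (hpos i (by omega)).le (pow_nonneg hcon i)
      · refine ⟨0, Finset.mem_range.mpr (Nat.succ_pos _), ?_⟩
        simpa using hpos 0 (Nat.zero_le d)
    rw [heval] at hpos'
    exact lt_irrefl 0 hpos'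
  set s : Multiset ℝ := F.roots.map (fun a => -a) with hsdef
  have hsmap : (s.map fun r => X + C r).prod = (F.roots.map fun a => X - C a).prod := by
    rw [hsdef, Multiset.map_map]
    congr 1
    apply Multiset.map_congr rfl
    intro x _
    simp [sub_eq_add_neg]
  have hfac2 : F = C F.leadingCoeff * (s.map fun r => X + C r).prod := by
    rw [hsmap]; exact hfac
  have hlc : 0 < F.leadingCoeff := by
    rw [Polynomial.leadingCoeff, hd]; exact hpos d le_rfl
  have hs : ∀ r ∈ s, 0 < r := by
    intro r hr
    rw [hsdef] at hr
    obtain ⟨a, ha, rfl⟩ := Multiset.mem_map.mp hr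
    linarith [hneg a ha]
  intro j hj _
  have := (key_lemma F.leadingCoeff hlc s hs).2.2 j hj
  rwa [← hfac2] at this
end

section
/- If a univariate real polynomial F(x) = Σᵢ₌₀ᵈ aᵢxⁱ of degree d ≥ 2 with positive coefficients is real-rooted, then its coefficients are α-concave with α = α(d,i) = ((d−i+1)/(d−i))·((i+1)/i); that is, aᵢ² ≥ α(d,i)·aᵢ₋₁·aᵢ₊₁ for all 1 ≤ i ≤ d−1. -/
open Polynomial


/-- If all complex roots of a real polynomial are real, it splits over ℝ
(roots counted with multiplicity equal the degree). -/
lemma aux_card_of_complex (p : ℝ[X]) (hp : p ≠ 0)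
    (h : ∀ z : ℂ, Polynomial.aeval z p = 0 → z.im = 0) :
    Multiset.card p.roots = p.natDegree := by
  apply splits_iff_card_roots.mp
  have hq0 : p.map (algebraMap ℝ ℂ) ≠ 0 :=
    (Polynomial.map_ne_zero_iff (algebraMap ℝ ℂ).injective).mpr hp
  have hsC : Splits (p.map (algebraMap ℝ ℂ)) := IsAlgClosed.splits _
  have heq := hsC.eq_prod_roots
  rw [leadingCoeff_map] at heq
  have hroots : ∀ z ∈ (p.map (algebraMap ℝ ℂ)).roots, z = Complex.ofReal z.re := by
    intro z hzr
    have hz : Polynomial.aeval z p = 0 := by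
      have := (mem_roots hq0).mp hzr
      rwa [aeval_def, ← eval_map]
    have him := h z hz
    exact (Complex.ext (by simp) (by simp [him])).symm
  refine splits_iff_exists_multiset.mpr ⟨(p.map (algebraMap ℝ ℂ)).roots.map Complex.re, ?_⟩
  apply Polynomial.map_injective (algebraMap ℝ ℂ) (algebraMap ℝ ℂ).injective
  rw [Polynomial.map_mul, Polynomial.map_C]
  conv_lhs => rw [heq]
  congr 1
  rw [Multiset.map_map, ← coe_mapRingHom,
    map_multiset_prod (mapRingHom (algebraMap ℝ ℂ)), Multiset.map_map]
  refine congrArg Multiset.prod (Multiset.map_congr rfl ?_)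
  intro z hz
  simp only [Function.comp_apply, coe_mapRingHom, Polynomial.map_sub, map_X, map_C]
  rw [show ((algebraMap ℝ ℂ) z.re : ℂ) = (z.re : ℂ) from rfl, ← hroots z hz]

/-- Conversely, if a real polynomial splits over ℝ then all its complex roots are real. -/
lemma aux_complex_of_card (p : ℝ[X]) (hp : p ≠ 0)
    (h : Multiset.card p.roots = p.natDegree) :
    ∀ z : ℂ, Polynomial.aeval z p = 0 → z.im = 0 := by
  have heq := (splits_iff_card_roots.mpr h).eq_prod_roots
  intro z hz
  rw [heq, map_mul, aeval_C] at hz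
  have hl : (algebraMap ℝ ℂ) p.leadingCoeff ≠ 0 := by
    simpa using leadingCoeff_ne_zero.mpr hp
  have hprod : Polynomial.aeval z ((p.roots.map fun a => X - C a).prod) = 0 := by
    rcases mul_eq_zero.mp hz with h' | h'
    · exact absurd h' hl
    · exact h'
  rw [map_multiset_prod, Multiset.map_map] at hprod
  have h0 : (0 : ℂ) ∈ p.roots.map fun a => Polynomial.aeval z (X - C a) := by
    rw [← Multiset.prod_eq_zero_iff]
    simpa using hprod
  obtain ⟨r, _, hr0⟩ := Multiset.mem_map.mp h0
  simp only [map_sub, aeval_X, aeval_C, sub_eq_zero] at hr0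
  rw [hr0]
  simp

/-- Reversal preserves the property of having only real complex roots. -/
lemma aux_reverse_roots (p : ℝ[X]) (h : ∀ z : ℂ, Polynomial.aeval z p = 0 → z.im = 0) :
    ∀ z : ℂ, Polynomial.aeval z p.reverse = 0 → z.im = 0 := by
  intro z hz
  by_cases h0 : z = 0
  · simp [h0]
  · have : Invertible (z⁻¹) := invertibleOfNonzero (inv_ne_zero h0)
    have hrev := eval₂_reverse_eq_zero_iff (algebraMap ℝ ℂ) (z⁻¹) p
    rw [invOf_eq_inv, inv_inv] at hrev
    have h1 : Polynomial.aeval (z⁻¹) p = 0 := by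
      rw [aeval_def] at hz ⊢
      exact hrev.mp hz
    have h2 := h _ h1
    rw [Complex.inv_im] at h2
    have h4 : Complex.normSq z ≠ 0 := by simpa using h0
    rcases div_eq_zero_iff.mp h2 with h' | h'
    · linarith [h']
    · exact absurd h' h4

/-- Iterated derivative of a real-rooted polynomial stays real-rooted, with degree dropping. -/
lemma aux_iter (p : ℝ[X]) (h : Multiset.card p.roots = p.natDegree) (k : ℕ)
    (hk : k ≤ p.natDegree) :
    Multiset.card (derivative^[k] p).roots = (derivative^[k] p).natDegree ∧
    (derivative^[k] p).natDegree = p.natDegree - k := by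
  induction k with
  | zero => simpa using h
  | succ k ih =>
    obtain ⟨ih1, ih2⟩ := ih (Nat.le_of_succ_le hk)
    have hpos : 0 < (derivative^[k] p).natDegree := by omega
    have hdeg : (derivative (derivative^[k] p)).natDegree = (derivative^[k] p).natDegree - 1 :=
      natDegree_eq_of_degree_eq_some (degree_derivative_eq _ hpos)
    have h1 := card_roots_le_derivative (derivative^[k] p)
    have h2 := card_roots' (derivative (derivative^[k] p))
    rw [Function.iterate_succ_apply']
    constructor <;> omega

/-- A real quadratic with a real root has nonnegative discriminant. -/
lemma aux_quad (Q : ℝ[X]) (hQ : Q.natDegree = 2) (hc : 0 < Multiset.card Q.roots) :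
    4 * (Q.coeff 0 * Q.coeff 2) ≤ (Q.coeff 1) ^ 2 := by
  obtain ⟨r, hr⟩ := Multiset.card_pos_iff_exists_mem.mp hc
  have hQ0 : Q ≠ 0 := fun h => by simp [h] at hQ
  have hroot : Q.eval r = 0 := (mem_roots hQ0).mp hr
  rw [eval_eq_sum_range, hQ] at hroot
  simp only [Finset.sum_range_succ, Finset.sum_range_zero, pow_zero, pow_one, mul_one,
    zero_add] at hroot
  have key : Q.coeff 1 ^ 2 - 4 * (Q.coeff 0 * Q.coeff 2) =
      (2 * Q.coeff 2 * r + Q.coeff 1) ^ 2 := by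
    linear_combination (-4 * Q.coeff 2) * hroot
  nlinarith [sq_nonneg (2 * Q.coeff 2 * r + Q.coeff 1), key]

/-- Kurtz, part (i): if a real polynomial `F = Σ_{i=0}^d aᵢ xⁱ` of degree `d ≥ 2`
with positive coefficients is real-rooted, then for all `1 ≤ i ≤ d-1` we have
`aᵢ² ≥ α(d,i)·a_{i-1}·a_{i+1}` with `α(d,i) = ((d-i+1)/(d-i))·((i+1)/i)`. -/
theorem realRooted_alphaConcave (F : Polynomial ℝ) (d : ℕ) (hd : F.natDegree = d)
    (hd2 : 2 ≤ d)
    (hpos : ∀ i ≤ d, 0 < F.coeff i)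
    (hroots : ∀ z : ℂ, Polynomial.aeval z F = 0 → z.im = 0) :
    ∀ i : ℕ, 1 ≤ i → i ≤ d - 1 →
      (((d : ℝ) - i + 1) / ((d : ℝ) - i)) * (((i : ℝ) + 1) / (i : ℝ)) *
          (F.coeff (i - 1) * F.coeff (i + 1)) ≤ (F.coeff i) ^ 2 := by
  intro i hi1 hi2
  obtain ⟨m, rfl⟩ : ∃ m, i = m + 1 := ⟨i - 1, by omega⟩
  obtain ⟨e, rfl⟩ : ∃ e, d = m + e + 2 := ⟨d - m - 2, by omega⟩
  have hF0 : F ≠ 0 := by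
    intro h
    have := hpos 0 (by omega)
    rw [h] at this
    simp at this
  have hFcard := aux_card_of_complex F hF0 hroots
  set G := derivative^[m] F with hGdef
  obtain ⟨hGcard, hGdeg⟩ := aux_iter F hFcard m (by omega)
  have hGdeg2 : G.natDegree = e + 2 := by rw [hGdeg, hd]; omega
  have hGc : ∀ t, G.coeff t = ((t + m).descFactorial m : ℝ) * F.coeff (t + m) := by
    intro t
    have h := coeff_iterate_derivative (k := m) F t
    rwa [nsmul_eq_mul] at h
  have hG0pos : 0 < G.coeff 0 := by
    rw [hGc 0]
    have hne : (0 + m).descFactorial m ≠ 0 := by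
      rw [Ne, Nat.descFactorial_eq_zero_iff_lt]
      omega
    exact mul_pos (by exact_mod_cast Nat.pos_of_ne_zero hne) (hpos _ (by omega))
  have hG0ne : G ≠ 0 := fun h => by simp [h] at hG0pos
  -- reverse
  set H := G.reverse with hHdef
  have hH0 : H ≠ 0 := fun h => hG0ne (reverse_eq_zero.mp h)
  have hHdeg : H.natDegree = e + 2 := by
    rw [hHdef, reverse_natDegree,
      natTrailingDegree_eq_zero.mpr (Or.inr (ne_of_gt hG0pos)), Nat.sub_zero, hGdeg2]
  have hGcomplex := aux_complex_of_card G hG0ne hGcard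
  have hHcomplex := aux_reverse_roots G hGcomplex
  have hHcard := aux_card_of_complex H hH0 hHcomplex
  set Q := derivative^[e] H with hQdef
  obtain ⟨hQcard, hQdeg⟩ := aux_iter H hHcard e (by omega)
  have hQdeg2 : Q.natDegree = 2 := by rw [hQdeg, hHdeg]; omega
  have hq := aux_quad Q hQdeg2 (by rw [hQcard, hQdeg2]; norm_num)
  have hQc : ∀ t, Q.coeff t = ((t + e).descFactorial e : ℝ) * H.coeff (t + e) := by
    intro t
    have h := coeff_iterate_derivative (k := e) H t
    rwa [nsmul_eq_mul] at h
  have hH0' : H.coeff (0 + e) = G.coeff 2 := by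
    rw [hHdef, coeff_reverse, revAt_le (by omega : 0 + e ≤ G.natDegree)]
    congr 1
    omega
  have hH1' : H.coeff (1 + e) = G.coeff 1 := by
    rw [hHdef, coeff_reverse, revAt_le (by omega : 1 + e ≤ G.natDegree)]
    congr 1
    omega
  have hH2' : H.coeff (2 + e) = G.coeff 0 := by
    rw [hHdef, coeff_reverse, revAt_le (by omega : 2 + e ≤ G.natDegree)]
    congr 1
    omega
  rw [hQc 0, hQc 1, hQc 2, hH0', hH1', hH2', hGc 0, hGc 1, hGc 2] at hq
  simp only [zero_add] at hq
  -- descFactorial → factorial facts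
  have hfe1 : (1 + e).descFactorial e = (e + 1).factorial := by
    have h1 := Nat.descFactorial_succ (e + 1) e
    have h2 : (e + 1).descFactorial (e + 1) = (e + 1).factorial := Nat.descFactorial_self _
    rw [show 1 + e = e + 1 by omega]
    simp only [show e + 1 - e = 1 by omega, one_mul] at h1
    omega
  have hfe2 : 2 * ((2 + e).descFactorial e) = (e + 2).factorial := by
    have h1 := Nat.descFactorial_succ (e + 2) (e + 1)
    have h2 := Nat.descFactorial_succ (e + 2) e
    have h3 : (e + 2).descFactorial (e + 2) = (e + 2).factorial := Nat.descFactorial_self _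
    rw [show 2 + e = e + 2 by omega]
    simp only [show e + 2 - (e + 1) = 1 by omega, show e + 2 - e = 2 by omega,
      show e + 1 + 1 = e + 2 by omega, one_mul] at h1 h2
    omega
  have hfm1 : (1 + m).descFactorial m = (m + 1).factorial := by
    have h1 := Nat.descFactorial_succ (m + 1) m
    have h2 : (m + 1).descFactorial (m + 1) = (m + 1).factorial := Nat.descFactorial_self _
    rw [show 1 + m = m + 1 by omega]
    simp only [show m + 1 - m = 1 by omega, one_mul] at h1
    omega
  have hfm2 : 2 * ((2 + m).descFactorial m) = (m + 2).factorial := by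
    have h1 := Nat.descFactorial_succ (m + 2) (m + 1)
    have h2 := Nat.descFactorial_succ (m + 2) m
    have h3 : (m + 2).descFactorial (m + 2) = (m + 2).factorial := Nat.descFactorial_self _
    rw [show 2 + m = m + 2 by omega]
    simp only [show m + 2 - (m + 1) = 1 by omega, show m + 2 - m = 2 by omega,
      show m + 1 + 1 = m + 2 by omega, one_mul] at h1 h2
    omega
  -- real cast versions
  have cE0 : ((e.descFactorial e : ℕ) : ℝ) = (e.factorial : ℝ) := by
    rw [Nat.descFactorial_self]
  have cM0 : ((m.descFactorial m : ℕ) : ℝ) = (m.factorial : ℝ) := by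
    rw [Nat.descFactorial_self]
  have cE1 : (((1 + e).descFactorial e : ℕ) : ℝ) = ((e : ℝ) + 1) * (e.factorial : ℝ) := by
    rw [hfe1, Nat.factorial_succ]
    push_cast
    ring
  have cM1 : (((1 + m).descFactorial m : ℕ) : ℝ) = ((m : ℝ) + 1) * (m.factorial : ℝ) := by
    rw [hfm1, Nat.factorial_succ]
    push_cast
    ring
  have cE2 : (((2 + e).descFactorial e : ℕ) : ℝ)
      = ((e : ℝ) + 2) * ((e : ℝ) + 1) * (e.factorial : ℝ) / 2 := by
    have h : ((2 * ((2 + e).descFactorial e) : ℕ) : ℝ) = (((e + 2).factorial : ℕ) : ℝ) := by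
      exact_mod_cast congrArg (fun n : ℕ => (n : ℝ)) hfe2
    rw [Nat.factorial_succ, Nat.factorial_succ] at h
    push_cast at h
    linarith
  have cM2 : (((2 + m).descFactorial m : ℕ) : ℝ)
      = ((m : ℝ) + 2) * ((m : ℝ) + 1) * (m.factorial : ℝ) / 2 := by
    have h : ((2 * ((2 + m).descFactorial m) : ℕ) : ℝ) = (((m + 2).factorial : ℕ) : ℝ) := by
      exact_mod_cast congrArg (fun n : ℕ => (n : ℝ)) hfm2
    rw [Nat.factorial_succ, Nat.factorial_succ] at h
    push_cast at h
    linarith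
  rw [cE0, cM0, cE1, cM1, cE2, cM2] at hq
  -- normalize coefficient indices
  rw [show 1 + m = m + 1 by omega, show 2 + m = m + 2 by omega] at hq
  -- cancel the factorials
  have key2 : (((m : ℝ) + 2) * ((e : ℝ) + 2) * (F.coeff m * F.coeff (m + 2))) *
        ((((e : ℝ) + 1) * ((m : ℝ) + 1)) * ((m.factorial : ℝ) * (e.factorial : ℝ)) ^ 2)
      ≤ ((((e : ℝ) + 1) * ((m : ℝ) + 1)) * (F.coeff (m + 1)) ^ 2) *
        ((((e : ℝ) + 1) * ((m : ℝ) + 1)) * ((m.factorial : ℝ) * (e.factorial : ℝ)) ^ 2) := by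
    calc (((m : ℝ) + 2) * ((e : ℝ) + 2) * (F.coeff m * F.coeff (m + 2))) *
          ((((e : ℝ) + 1) * ((m : ℝ) + 1)) * ((m.factorial : ℝ) * (e.factorial : ℝ)) ^ 2)
        = 4 * ((e.factorial : ℝ) *
            (((m : ℝ) + 2) * ((m : ℝ) + 1) * (m.factorial : ℝ) / 2 * F.coeff (m + 2)) *
          (((e : ℝ) + 2) * ((e : ℝ) + 1) * (e.factorial : ℝ) / 2 *
            ((m.factorial : ℝ) * F.coeff m))) := by ring
      _ ≤ (((e : ℝ) + 1) * (e.factorial : ℝ) *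
            (((m : ℝ) + 1) * (m.factorial : ℝ) * F.coeff (m + 1))) ^ 2 := by
          calc _ = 4 * ((e.factorial : ℝ) *
                (((m : ℝ) + 2) * ((m : ℝ) + 1) * (m.factorial : ℝ) / 2 * F.coeff (m + 2)) *
              (((e : ℝ) + 2) * ((e : ℝ) + 1) * (e.factorial : ℝ) / 2 *
                ((m.factorial : ℝ) * F.coeff m))) := rfl
            _ ≤ _ := by nlinarith [hq]
      _ = ((((e : ℝ) + 1) * ((m : ℝ) + 1)) * (F.coeff (m + 1)) ^ 2) *
          ((((e : ℝ) + 1) * ((m : ℝ) + 1)) * ((m.factorial : ℝ) * (e.factorial : ℝ)) ^ 2) := by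
          ring
  have hKpos : (0 : ℝ) < (((e : ℝ) + 1) * ((m : ℝ) + 1)) *
      ((m.factorial : ℝ) * (e.factorial : ℝ)) ^ 2 := by positivity
  have key3 := le_of_mul_le_mul_right key2 hKpos
  -- finish
  simp only [Nat.add_sub_cancel]
  rw [show m + 1 + 1 = m + 2 by omega]
  have hc1 : ((m + e + 2 : ℕ) : ℝ) - ((m + 1 : ℕ) : ℝ) = (e : ℝ) + 1 := by
    push_cast
    ring
  rw [hc1]
  have hc2 : ((m + 1 : ℕ) : ℝ) = (m : ℝ) + 1 := by push_cast; ring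
  rw [hc2]
  rw [div_mul_div_comm, div_mul_eq_mul_div,
    div_le_iff₀ (by positivity : (0 : ℝ) < ((e : ℝ) + 1) * ((m : ℝ) + 1))]
  linarith [key3]
end

section
/- For every finite simple graph G, the matching defect polynomial M(G;x) = Σ_k (−1)^k m_k(G) x^{n−2k} is real-rooted, where m_k(G) is the number of k-matchings of G and n = |V(G)|. -/
open Polynomial
open scoped Classical


/-- The number `m_k(G)` of `k`-matchings (sets of `k` pairwise disjoint edges) of `G`. -/
noncomputable def matchCount {V : Type} [Fintype V] (G : SimpleGraph V) (k : ℕ) : ℕ :=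
  ((G.edgeFinset.powersetCard k).filter
    (fun s => ∀ e ∈ s, ∀ f ∈ s, e ≠ f → ∀ v : V, v ∈ e → v ∉ f)).card

/-- The matching defect polynomial `M(G;x) = Σ_k (−1)^k m_k(G) x^{n−2k}` (real coefficients). -/
noncomputable def defectPoly {V : Type} [Fintype V] (G : SimpleGraph V) : Polynomial ℝ :=
  ∑ k ∈ Finset.range (Fintype.card V + 1),
    ((-1 : ℝ) ^ k * (matchCount G k : ℝ)) • X ^ (Fintype.card V - 2 * k)

namespace HLaux

variable {V : Type} [Fintype V]

/-- matchings of `G` using only vertices of `W`. -/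
noncomputable def matchingsIn (G : SimpleGraph V) (W : Finset V) : Finset (Finset (Sym2 V)) :=
  G.edgeFinset.powerset.filter
    (fun M => (∀ e ∈ M, ∀ w : V, w ∈ e → w ∈ W) ∧
      ∀ e ∈ M, ∀ f ∈ M, e ≠ f → ∀ v : V, v ∈ e → v ∉ f)

lemma mem_matchingsIn {G : SimpleGraph V} {W : Finset V} {M : Finset (Sym2 V)} :
    M ∈ matchingsIn G W ↔ M ⊆ G.edgeFinset ∧ (∀ e ∈ M, ∀ w : V, w ∈ e → w ∈ W) ∧
      (∀ e ∈ M, ∀ f ∈ M, e ≠ f → ∀ v : V, v ∈ e → v ∉ f) := by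
  simp [matchingsIn, Finset.mem_filter, Finset.mem_powerset, and_assoc]

lemma two_mul_card_le {W : Finset V} {M : Finset (Sym2 V)}
    (hE : ∀ e ∈ M, ¬ e.IsDiag)
    (hW : ∀ e ∈ M, ∀ w : V, w ∈ e → w ∈ W)
    (hD : ∀ e ∈ M, ∀ f ∈ M, e ≠ f → ∀ v : V, v ∈ e → v ∉ f) :
    2 * M.card ≤ W.card := by
  classical
  induction M using Finset.induction generalizing W with
  | empty => simp
  | @insert e M he hins =>
    obtain ⟨a, b, rfl⟩ : ∃ a b : V, e = s(a, b) := ⟨e.out.1, e.out.2, by simp [Sym2.mk, Prod.mk.eta, Quot.out_eq]⟩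
    have hab : a ≠ b := by
      have := hE s(a, b) (Finset.mem_insert_self _ _)
      simpa [Sym2.isDiag_iff_proj_eq] using this
    have haW : a ∈ W := hW s(a,b) (Finset.mem_insert_self _ _) a (by simp)
    have hbW : b ∈ W := hW s(a,b) (Finset.mem_insert_self _ _) b (by simp)
    have hsub : ∀ f ∈ M, ∀ w : V, w ∈ f → w ∈ (W.erase a).erase b := by
      intro f hf w hw
      have hfe : s(a,b) ≠ f := by rintro rfl; exact he hf
      have ha' : a ∉ f := hD s(a,b) (Finset.mem_insert_self _ _) f
        (Finset.mem_insert_of_mem hf) hfe a (by simp)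
      have hb' : b ∉ f := hD s(a,b) (Finset.mem_insert_self _ _) f
        (Finset.mem_insert_of_mem hf) hfe b (by simp)
      refine Finset.mem_erase.2 ⟨?_, Finset.mem_erase.2 ⟨?_, hW f (Finset.mem_insert_of_mem hf) w hw⟩⟩
      · rintro rfl; exact hb' hw
      · rintro rfl; exact ha' hw
    have hM := hins (fun f hf => hE f (Finset.mem_insert_of_mem hf)) hsub
      (fun f hf g hg hfg => hD f (Finset.mem_insert_of_mem hf) g (Finset.mem_insert_of_mem hg) hfg)
    have hba : b ∈ W.erase a := Finset.mem_erase.2 ⟨hab.symm, hbW⟩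
    have hc1 : (W.erase a).card = W.card - 1 := Finset.card_erase_of_mem haW
    have hc2 : ((W.erase a).erase b).card = (W.erase a).card - 1 := Finset.card_erase_of_mem hba
    have hWpos : 2 ≤ W.card := by
      have : ({a, b} : Finset V) ⊆ W := by
        intro x hx; rcases Finset.mem_insert.1 hx with rfl | hx
        · exact haW
        · simpa using (Finset.mem_singleton.1 hx) ▸ hbW
      have := Finset.card_le_card this
      rwa [Finset.card_insert_of_notMem (by simpa using hab), Finset.card_singleton] at this
    rw [Finset.card_insert_of_notMem he]
    omega


/-- defect polynomial restricted to vertex set `W` -/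
noncomputable def P (G : SimpleGraph V) (W : Finset V) : Polynomial ℝ :=
  ∑ M ∈ matchingsIn G W, ((-1:ℝ) ^ M.card) • X ^ (W.card - 2 * M.card)

lemma two_mul_card_le' {G : SimpleGraph V} {W : Finset V} {M : Finset (Sym2 V)}
    (hM : M ∈ matchingsIn G W) : 2 * M.card ≤ W.card := by
  obtain ⟨h1, h2, h3⟩ := mem_matchingsIn.1 hM
  exact two_mul_card_le (fun e he => G.not_isDiag_of_mem_edgeFinset (h1 he)) h2 h3

lemma matchingsIn_empty (G : SimpleGraph V) : matchingsIn G ∅ = {∅} := by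
  ext M
  simp only [Finset.mem_singleton, mem_matchingsIn]
  constructor
  · rintro ⟨h1, h2, h3⟩
    by_contra hne
    obtain ⟨e, he⟩ := Finset.nonempty_iff_ne_empty.2 hne
    induction e using Sym2.ind with
    | _ a b => exact absurd (h2 _ he a (by simp)) (by simp)
  · rintro rfl; simp

lemma P_empty (G : SimpleGraph V) : P G ∅ = 1 := by
  simp [P, matchingsIn_empty]

lemma P_rec (G : SimpleGraph V) (W : Finset V) (v : V) (hv : v ∈ W) :
    P G W = X * P G (W.erase v)
      - ∑ u ∈ (W.erase v).filter (fun u => G.Adj v u), P G ((W.erase v).erase u) := by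
  classical
  have hsplit := Finset.sum_filter_add_sum_filter_not (matchingsIn G W)
    (fun M => ∀ e ∈ M, v ∉ e)
    (fun M => ((-1:ℝ) ^ M.card) • (X:ℝ[X]) ^ (W.card - 2 * M.card))
  -- part 1 : matchings avoiding v
  have hset1 : (matchingsIn G W).filter (fun M => ∀ e ∈ M, v ∉ e)
      = matchingsIn G (W.erase v) := by
    ext M
    simp only [Finset.mem_filter, mem_matchingsIn]
    constructor
    · rintro ⟨⟨h1, h2, h3⟩, h4⟩
      refine ⟨h1, fun e he w hw => Finset.mem_erase.2 ⟨?_, h2 e he w hw⟩, h3⟩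
      rintro rfl; exact h4 e he hw
    · rintro ⟨h1, h2, h3⟩
      refine ⟨⟨h1, fun e he w hw => (Finset.mem_erase.1 (h2 e he w hw)).2, h3⟩, ?_⟩
      intro e he hv'
      exact (Finset.mem_erase.1 (h2 e he v hv')).1 rfl
  have hcard : W.card = (W.erase v).card + 1 := by
    rw [Finset.card_erase_of_mem hv]
    have := Finset.card_pos.2 ⟨v, hv⟩
    omega
  have hpart1 : ∑ M ∈ (matchingsIn G W).filter (fun M => ∀ e ∈ M, v ∉ e),
      ((-1:ℝ) ^ M.card) • (X:ℝ[X]) ^ (W.card - 2 * M.card)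
      = X * P G (W.erase v) := by
    rw [hset1, P, Finset.mul_sum]
    refine Finset.sum_congr rfl (fun M hM => ?_)
    have h2 : 2 * M.card ≤ (W.erase v).card := two_mul_card_le' hM
    have : W.card - 2 * M.card = ((W.erase v).card - 2 * M.card) + 1 := by omega
    rw [this, pow_succ, mul_smul_comm, mul_comm ((X:ℝ[X]) ^ _) X]
  -- part 2 : matchings covering v
  set U := (W.erase v).filter (fun u => G.Adj v u) with hU
  have hvW2 : ∀ u : V, v ∉ (W.erase v).erase u := fun u h =>
    (Finset.mem_erase.1 ((Finset.mem_erase.1 h).2)).1 rfl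
  have hset2 : (matchingsIn G W).filter (fun M => ¬ ∀ e ∈ M, v ∉ e)
      = U.biUnion (fun u => (matchingsIn G W).filter (fun M => s(v,u) ∈ M)) := by
    ext M
    simp only [Finset.mem_biUnion, Finset.mem_filter, not_forall, not_not, exists_prop]
    constructor
    · rintro ⟨hM, e, he, hve⟩
      obtain ⟨u, rfl⟩ := Sym2.mem_iff_exists.1 hve
      obtain ⟨h1, h2, h3⟩ := mem_matchingsIn.1 hM
      have hadj : G.Adj v u := by
        have := h1 he
        rw [SimpleGraph.mem_edgeFinset, SimpleGraph.mem_edgeSet] at this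
        exact this
      have huW : u ∈ W := h2 _ he u (by simp)
      exact ⟨u, Finset.mem_filter.2 ⟨Finset.mem_erase.2 ⟨hadj.ne', huW⟩, hadj⟩, hM, he⟩
    · rintro ⟨u, hu, hM, he⟩
      exact ⟨hM, s(v,u), he, by simp⟩
  have hdisj : (↑U : Set V).PairwiseDisjoint
      (fun u => (matchingsIn G W).filter (fun M => s(v,u) ∈ M)) := by
    intro u hu u' hu' huu'
    simp only [Finset.mem_coe, hU, Finset.mem_filter, Finset.mem_erase] at hu hu'
    refine Finset.disjoint_left.2 ?_
    intro M hM hM'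
    obtain ⟨hMm, he⟩ := Finset.mem_filter.1 hM
    obtain ⟨_, he'⟩ := Finset.mem_filter.1 hM'
    obtain ⟨_, _, h3⟩ := mem_matchingsIn.1 hMm
    have hne : s(v,u) ≠ s(v,u') := by
      intro h
      rcases Sym2.eq_iff.1 h with ⟨-, rfl⟩ | ⟨rfl, rfl⟩
      · exact huu' rfl
      · exact hu.1.1 rfl
    exact h3 _ he _ he' hne v (by simp) (by simp)
  have hclass : ∀ u ∈ U,
      ∑ M ∈ (matchingsIn G W).filter (fun M => s(v,u) ∈ M),
        ((-1:ℝ) ^ M.card) • (X:ℝ[X]) ^ (W.card - 2 * M.card)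
      = - P G ((W.erase v).erase u) := by
    intro u hu
    obtain ⟨huW, hadj⟩ := Finset.mem_filter.1 hu
    obtain ⟨hune, huW'⟩ := Finset.mem_erase.1 huW
    set W2 := (W.erase v).erase u with hW2
    have hvu_edge : s(v,u) ∈ G.edgeFinset := by
      rw [SimpleGraph.mem_edgeFinset, SimpleGraph.mem_edgeSet]; exact hadj
    have hW2card : W2.card = W.card - 2 := by
      rw [hW2, Finset.card_erase_of_mem huW, Finset.card_erase_of_mem hv]
      omega
    have key : ∑ M ∈ (matchingsIn G W).filter (fun M => s(v,u) ∈ M),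
        ((-1:ℝ) ^ M.card) • (X:ℝ[X]) ^ (W.card - 2 * M.card)
        = ∑ M' ∈ matchingsIn G W2,
            -(((-1:ℝ) ^ M'.card) • (X:ℝ[X]) ^ (W2.card - 2 * M'.card)) := by
      refine Finset.sum_nbij' (fun M => M.erase s(v,u)) (fun M' => insert s(v,u) M')
        ?_ ?_ ?_ ?_ ?_
      · intro M hM
        obtain ⟨hMm, he⟩ := Finset.mem_filter.1 hM
        obtain ⟨h1, h2, h3⟩ := mem_matchingsIn.1 hMm
        refine mem_matchingsIn.2 ⟨(Finset.erase_subset _ _).trans h1, ?_, ?_⟩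
        · intro f hf w hw
          obtain ⟨hfne, hfM⟩ := Finset.mem_erase.1 hf
          have hwW : w ∈ W := h2 f hfM w hw
          have hwvu : w ∉ s(v,u) := fun hws => h3 _ he f hfM hfne.symm w hws hw
          refine Finset.mem_erase.2 ⟨?_, Finset.mem_erase.2 ⟨?_, hwW⟩⟩
          · rintro rfl; exact hwvu (by simp)
          · rintro rfl; exact hwvu (by simp)
        · intro f hf g hg hfg
          exact h3 f (Finset.mem_of_mem_erase hf) g (Finset.mem_of_mem_erase hg) hfg
      · intro M' hM'
        obtain ⟨h1, h2, h3⟩ := mem_matchingsIn.1 hM'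
        have hnotmem : s(v,u) ∉ M' := by
          intro h
          exact hvW2 u (h2 _ h v (by simp))
        have hmemW2 : ∀ f ∈ M', ∀ w : V, w ∈ f → w ≠ v ∧ w ≠ u := by
          intro f hf w hw
          have := h2 f hf w hw
          rw [hW2] at this
          exact ⟨fun h => hvW2 u (h ▸ this), fun h => (Finset.mem_erase.1 this).1 h⟩
        show insert s(v,u) M' ∈ Finset.filter (fun M => s(v,u) ∈ M) (matchingsIn G W)
        refine Finset.mem_filter.2 ⟨mem_matchingsIn.2 ⟨?_, ?_, ?_⟩, Finset.mem_insert_self _ _⟩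
        · intro e he
          rcases Finset.mem_insert.1 he with rfl | he
          · exact hvu_edge
          · exact h1 he
        · intro e he w hw
          rcases Finset.mem_insert.1 he with rfl | he
          · rcases Sym2.mem_iff.1 hw with rfl | rfl
            · exact hv
            · exact huW'
          · exact Finset.mem_of_mem_erase (Finset.mem_of_mem_erase (h2 e he w hw))
        · intro e he f hf hef w hwe hwf
          rcases Finset.mem_insert.1 he with he' | he' <;>
            rcases Finset.mem_insert.1 hf with hf' | hf'
          · exact hef (he'.trans hf'.symm)
          · subst he'
            rcases Sym2.mem_iff.1 hwe with h | h
            · exact absurd h (hmemW2 f hf' w hwf).1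
            · exact absurd h (hmemW2 f hf' w hwf).2
          · subst hf'
            rcases Sym2.mem_iff.1 hwf with h | h
            · exact absurd h (hmemW2 e he' w hwe).1
            · exact absurd h (hmemW2 e he' w hwe).2
          · exact h3 e he' f hf' hef w hwe hwf
      · intro M hM
        exact Finset.insert_erase (Finset.mem_filter.1 hM).2
      · intro M' hM'
        refine Finset.erase_insert ?_
        intro h
        exact hvW2 u ((mem_matchingsIn.1 hM').2.1 _ h v (by simp))
      · intro M hM
        obtain ⟨hMm, he⟩ := Finset.mem_filter.1 hM
        have hcardM : 1 ≤ M.card := Finset.card_pos.2 ⟨_, he⟩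
        have hce : (M.erase s(v,u)).card = M.card - 1 := Finset.card_erase_of_mem he
        have h2c : 2 * M.card ≤ W.card := two_mul_card_le' hMm
        have hexp : W.card - 2 * M.card = W2.card - 2 * (M.card - 1) := by
          rw [hW2card]; omega
        have hsign : ((-1:ℝ) ^ M.card) = -((-1:ℝ) ^ (M.card - 1)) := by
          conv_lhs => rw [show M.card = (M.card - 1) + 1 from by omega]
          rw [pow_succ]; ring
        rw [hce, hexp, hsign, neg_smul]
    rw [key, P, ← Finset.sum_neg_distrib]
  rw [P, ← hsplit, hpart1, hset2, Finset.sum_biUnion hdisj,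
    Finset.sum_congr rfl hclass, Finset.sum_neg_distrib]
  ring


lemma key (G : SimpleGraph V) (z : ℂ) (hz : 0 < z.im) :
    ∀ n (W : Finset V), W.card = n →
      Polynomial.aeval z (P G W) ≠ 0 ∧
      ∀ v ∈ W, z.im ≤ ((Polynomial.aeval z (P G W)) /
        (Polynomial.aeval z (P G (W.erase v)))).im := by
  intro n
  induction n using Nat.strong_induction_on with
  | _ n ih =>
  intro W hWn
  have partb : ∀ v ∈ W, z.im ≤ ((Polynomial.aeval z (P G W)) /
      (Polynomial.aeval z (P G (W.erase v)))).im := by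
    intro v hv
    have hnpos : 1 ≤ n := by
      have := Finset.card_pos.2 ⟨v, hv⟩; omega
    have hW'card : (W.erase v).card = n - 1 := by
      rw [Finset.card_erase_of_mem hv, hWn]
    obtain ⟨hne, hrat⟩ := ih (n-1) (by omega) (W.erase v) hW'card
    have heval : Polynomial.aeval z (P G W) =
        z * Polynomial.aeval z (P G (W.erase v))
          - ∑ u ∈ (W.erase v).filter (fun u => G.Adj v u),
              Polynomial.aeval z (P G ((W.erase v).erase u)) := by
      rw [P_rec G W v hv]
      simp [map_sub, map_mul, map_sum]
    have hdiv : Polynomial.aeval z (P G W) / Polynomial.aeval z (P G (W.erase v)) =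
        z - ∑ u ∈ (W.erase v).filter (fun u => G.Adj v u),
            Polynomial.aeval z (P G ((W.erase v).erase u)) /
              Polynomial.aeval z (P G (W.erase v)) := by
      rw [heval, sub_div, Finset.sum_div, mul_div_assoc, div_self hne, mul_one]
    rw [hdiv, Complex.sub_im]
    have himsum : (∑ u ∈ (W.erase v).filter (fun u => G.Adj v u),
        Polynomial.aeval z (P G ((W.erase v).erase u)) /
          Polynomial.aeval z (P G (W.erase v))).im ≤ 0 := by
      rw [Complex.im_sum]
      apply Finset.sum_nonpos
      intro u hu
      have huW' : u ∈ W.erase v := (Finset.mem_filter.1 hu).1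
      have hterm := hrat u huW'
      set r := Polynomial.aeval z (P G (W.erase v)) /
        Polynomial.aeval z (P G ((W.erase v).erase u)) with hr
      have hrim : 0 < r.im := lt_of_lt_of_le hz hterm
      by_cases h0 : Polynomial.aeval z (P G ((W.erase v).erase u)) = 0
      · simp [h0]
      · have hinv : Polynomial.aeval z (P G ((W.erase v).erase u)) /
            Polynomial.aeval z (P G (W.erase v)) = r⁻¹ := by
          rw [hr, inv_div]
        rw [hinv, Complex.inv_im]
        apply div_nonpos_of_nonpos_of_nonneg
        · linarith
        · exact Complex.normSq_nonneg r
    linarith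
  refine ⟨?_, partb⟩
  rcases Finset.eq_empty_or_nonempty W with rfl | ⟨v, hv⟩
  · rw [P_empty]; simp
  · intro h0
    have hb := partb v hv
    rw [h0, zero_div] at hb
    simp only [Complex.zero_im] at hb
    linarith

end HLaux

lemma defectPoly_eq {V : Type} [Fintype V] (G : SimpleGraph V) :
    defectPoly G = HLaux.P G Finset.univ := by
  classical
  have hmap : ∀ M ∈ HLaux.matchingsIn G Finset.univ,
      M.card ∈ Finset.range (Fintype.card V + 1) := by
    intro M hM
    have := HLaux.two_mul_card_le' hM
    rw [Finset.card_univ] at this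
    rw [Finset.mem_range]; omega
  rw [defectPoly, HLaux.P,
    ← Finset.sum_fiberwise_of_maps_to hmap
      (fun M => ((-1:ℝ) ^ M.card) • (X:ℝ[X]) ^ (Finset.univ.card - 2 * M.card))]
  refine Finset.sum_congr rfl (fun k hk => ?_)
  have hfib : (HLaux.matchingsIn G Finset.univ).filter (fun M => M.card = k)
      = (G.edgeFinset.powersetCard k).filter
          (fun s => ∀ e ∈ s, ∀ f ∈ s, e ≠ f → ∀ v : V, v ∈ e → v ∉ f) := by
    ext M
    simp only [Finset.mem_filter, HLaux.mem_matchingsIn, Finset.mem_powersetCard]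
    constructor
    · rintro ⟨⟨h1, h2, h3⟩, h4⟩
      exact ⟨⟨h1, h4⟩, h3⟩
    · rintro ⟨⟨h1, h4⟩, h3⟩
      exact ⟨⟨h1, fun e he w hw => Finset.mem_univ w, h3⟩, h4⟩
  have hconst : ∀ M ∈ (HLaux.matchingsIn G Finset.univ).filter (fun M => M.card = k),
      ((-1:ℝ) ^ M.card) • (X:ℝ[X]) ^ ((Finset.univ : Finset V).card - 2 * M.card)
        = ((-1:ℝ) ^ k) • (X:ℝ[X]) ^ (Fintype.card V - 2 * k) := by
    intro M hM
    rw [(Finset.mem_filter.1 hM).2, Finset.card_univ]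
  rw [Finset.sum_congr rfl hconst, Finset.sum_const, hfib]
  rw [matchCount]
  rw [← Nat.cast_smul_eq_nsmul ℝ, smul_smul, mul_comm]

/-- Heilmann–Lieb: for every finite simple graph `G`, the matching defect
polynomial `M(G;x)` is real-rooted: all its complex roots are real. -/
theorem defectPoly_realRooted {V : Type} [Fintype V] (G : SimpleGraph V) :
    ∀ z : ℂ, Polynomial.aeval z (defectPoly G) = 0 → z.im = 0 := by
  intro z hzero
  by_contra him
  rcases lt_or_gt_of_ne him with hlt | hgt
  · have h2 : Polynomial.aeval ((starRingEnd ℂ) z) (defectPoly G) = 0 := by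
      rw [Polynomial.aeval_conj, hzero, map_zero]
    have hkey := (HLaux.key G ((starRingEnd ℂ) z)
      (by simp only [Complex.conj_im]; linarith) Finset.univ.card Finset.univ rfl).1
    rw [← defectPoly_eq] at hkey
    exact hkey h2
  · have hkey := (HLaux.key G z hgt Finset.univ.card Finset.univ rfl).1
    rw [← defectPoly_eq] at hkey
    exact hkey hzero
end

section
/- For every finite simple graph G, the sequence m_0(G), m_1(G), …, m_{⌊n/2⌋}(G) of numbers of k-matchings is unimodal. -/
open scoped Classical

set_option linter.unusedSectionVars false

namespace MatchLC

variable {V : Type} [Fintype V] [LinearOrder V]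

/-- the set of vertices covered by a set of edges -/
noncomputable def vset (S : Finset (Sym2 V)) : Finset V :=
  Finset.univ.filter (fun v => ∃ e ∈ S, v ∈ e)

lemma mem_vset {S : Finset (Sym2 V)} {v : V} : v ∈ vset S ↔ ∃ e ∈ S, v ∈ e := by
  simp [vset]

/-- two edges of `U` sharing a vertex -/
def adjE (U : Finset (Sym2 V)) (e f : Sym2 V) : Prop :=
  e ∈ U ∧ f ∈ U ∧ ∃ v, v ∈ e ∧ v ∈ f

lemma adjE_symm {U : Finset (Sym2 V)} {e f : Sym2 V} (h : adjE U e f) : adjE U f e := by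
  obtain ⟨he, hf, v, hv1, hv2⟩ := h
  exact ⟨hf, he, v, hv2, hv1⟩

def reach (U : Finset (Sym2 V)) : Sym2 V → Sym2 V → Prop :=
  Relation.ReflTransGen (adjE U)

lemma reach_symm {U : Finset (Sym2 V)} {e f : Sym2 V} (h : reach U e f) : reach U f e := by
  induction h with
  | refl => exact Relation.ReflTransGen.refl
  | tail _ h2 ih => exact Relation.ReflTransGen.head (adjE_symm h2) ih

lemma reach_trans {U : Finset (Sym2 V)} {e f g : Sym2 V} (h1 : reach U e f) (h2 : reach U f g) :
    reach U e g := Relation.ReflTransGen.trans h1 h2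

lemma reach_mem_right {U : Finset (Sym2 V)} {e f : Sym2 V} (hne : e ≠ f) (h : reach U e f) :
    f ∈ U := by
  induction h with
  | refl => exact absurd rfl hne
  | tail _ h2 _ => exact h2.2.1

/-- component of edge `e` in `U` -/
noncomputable def comp (U : Finset (Sym2 V)) (e : Sym2 V) : Finset (Sym2 V) :=
  U.filter (reach U e)

lemma mem_comp {U : Finset (Sym2 V)} {e f : Sym2 V} :
    f ∈ comp U e ↔ f ∈ U ∧ reach U e f := by simp [comp]

lemma self_mem_comp {U : Finset (Sym2 V)} {e : Sym2 V} (he : e ∈ U) : e ∈ comp U e :=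
  mem_comp.2 ⟨he, Relation.ReflTransGen.refl⟩

lemma comp_eq_of_reach {U : Finset (Sym2 V)} {e f : Sym2 V} (h : reach U e f) :
    comp U e = comp U f := by
  ext g
  simp only [mem_comp]
  exact ⟨fun ⟨hg, hr⟩ => ⟨hg, reach_trans (reach_symm h) hr⟩,
    fun ⟨hg, hr⟩ => ⟨hg, reach_trans h hr⟩⟩

lemma mem_comp_self_of_mem {U : Finset (Sym2 V)} {e f : Sym2 V} (h : f ∈ comp U e) :
    comp U e = comp U f := comp_eq_of_reach (mem_comp.1 h).2

/-- chains of length n -/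
def reachN (U : Finset (Sym2 V)) : ℕ → Sym2 V → Sym2 V → Prop
  | 0, e, f => e = f
  | (n+1), e, f => ∃ g, adjE U e g ∧ reachN U n g f

lemma reach_iff_reachN {U : Finset (Sym2 V)} {e f : Sym2 V} :
    reach U e f ↔ ∃ n, reachN U n e f := by
  constructor
  · intro h
    induction h with
    | refl => exact ⟨0, rfl⟩
    | tail h1 h2 ih =>
      obtain ⟨n, hn⟩ := ih
      -- need to append at the end: prove auxiliary
      clear h1
      induction n generalizing e with
      | zero => cases hn; exact ⟨1, _, h2, rfl⟩
      | succ n ih2 =>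
        obtain ⟨g, hg, hgn⟩ := hn
        obtain ⟨m, hm⟩ := ih2 hgn
        exact ⟨m+1, g, hg, hm⟩
  · rintro ⟨n, hn⟩
    induction n generalizing e with
    | zero => cases hn; exact Relation.ReflTransGen.refl
    | succ n ih =>
      obtain ⟨g, hg, hgn⟩ := hn
      exact Relation.ReflTransGen.head hg (ih hgn)

lemma reachN_succ_iff_tail {U : Finset (Sym2 V)} {e f : Sym2 V} {n : ℕ} :
    reachN U (n+1) e f ↔ ∃ g, reachN U n e g ∧ adjE U g f := by
  induction n generalizing e with
  | zero =>
    constructor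
    · rintro ⟨g, hg, h⟩; cases h; exact ⟨e, rfl, hg⟩
    · rintro ⟨g, hg, h⟩; cases hg; exact ⟨f, h, rfl⟩
  | succ n ih =>
    constructor
    · rintro ⟨g, hg, h⟩
      obtain ⟨g', h1, h2⟩ := ih.1 h
      exact ⟨g', ⟨g, hg, h1⟩, h2⟩
    · rintro ⟨g, ⟨g', hg', h1⟩, h2⟩
      exact ⟨g', hg', ih.2 ⟨g, h1, h2⟩⟩

/-- distance from e within U (junk 0 if unreachable) -/
noncomputable def edist (U : Finset (Sym2 V)) (e f : Sym2 V) : ℕ :=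
  if h : ∃ n, reachN U n e f then Nat.find h else 0

lemma edist_spec {U : Finset (Sym2 V)} {e f : Sym2 V} (h : reach U e f) :
    reachN U (edist U e f) e f := by
  rw [reach_iff_reachN] at h
  rw [edist, dif_pos h]
  exact Nat.find_spec h

lemma edist_le {U : Finset (Sym2 V)} {e f : Sym2 V} {n : ℕ} (h : reachN U n e f) :
    edist U e f ≤ n := by
  have h' : ∃ n, reachN U n e f := ⟨n, h⟩
  rw [edist, dif_pos h']
  exact Nat.find_le h



lemma sym2_eq_of_two_mem {z : Sym2 V} {a b : V} (hab : a ≠ b) (ha : a ∈ z) (hb : b ∈ z) :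
    z = s(a, b) := (Sym2.mem_and_mem_iff hab).1 ⟨ha, hb⟩

lemma vset_singleton (a b : V) : vset {s(a, b)} = ({a, b} : Finset V) := by
  ext v; simp [mem_vset, Sym2.mem_iff]

lemma card_vset_singleton_le (e : Sym2 V) : (vset {e}).card ≤ 2 := by
  induction e with
  | _ a b =>
    rw [vset_singleton]
    exact (Finset.card_insert_le _ _).trans (by simp)

/-- an edge adjacent to something in a component is in the component -/
lemma mem_comp_of_adj {U : Finset (Sym2 V)} {e f g : Sym2 V} (hf : f ∈ comp U e)
    (h : adjE U f g) : g ∈ comp U e := by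
  rw [mem_comp] at hf ⊢
  exact ⟨h.2.1, Relation.ReflTransGen.tail hf.2 h⟩

/-- a strictly closer neighbour exists -/
lemma exists_closer {U : Finset (Sym2 V)} {e f : Sym2 V} (hf : f ∈ comp U e) (hne : f ≠ e) :
    ∃ g ∈ comp U e, adjE U g f ∧ edist U e g < edist U e f := by
  have hr : reach U e f := (mem_comp.1 hf).2
  have hd := edist_spec hr
  rcases hn : edist U e f with _ | m
  · rw [hn] at hd; exact absurd hd.symm hne
  · rw [hn] at hd
    obtain ⟨g, hg1, hg2⟩ := reachN_succ_iff_tail.1 hd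
    refine ⟨g, ?_, hg2, ?_⟩
    · exact mem_comp.2 ⟨hg2.1, (reach_iff_reachN).2 ⟨m, hg1⟩⟩
    · exact lt_of_le_of_lt (edist_le hg1) (by omega)

/-- choice of minimal-distance edge through a vertex -/
noncomputable def minEdge (U : Finset (Sym2 V)) (e : Sym2 V) (v : V) : Sym2 V :=
  if h : ((comp U e).filter (fun f => v ∈ f)).Nonempty then
    (Finset.exists_min_image _ (edist U e) h).choose
  else e

lemma minEdge_spec {U : Finset (Sym2 V)} {e : Sym2 V} {v : V}
    (h : ((comp U e).filter (fun f => v ∈ f)).Nonempty) :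
    minEdge U e v ∈ comp U e ∧ v ∈ minEdge U e v ∧
      ∀ f ∈ comp U e, v ∈ f → edist U e (minEdge U e v) ≤ edist U e f := by
  rw [minEdge, dif_pos h]
  obtain ⟨h1, h2⟩ := (Finset.exists_min_image ((comp U e).filter (fun f => v ∈ f))
    (edist U e) h).choose_spec
  rw [Finset.mem_filter] at h1
  exact ⟨h1.1, h1.2, fun f hf hvf => h2 f (Finset.mem_filter.2 ⟨hf, hvf⟩)⟩

/-- THE TREE BOUND: a connected component covers at most (#edges + 1) vertices -/
lemma card_vset_comp_le {U : Finset (Sym2 V)} {e : Sym2 V} (he : e ∈ U) :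
    (vset (comp U e)).card ≤ (comp U e).card + 1 := by
  classical
  set C := comp U e with hC
  have hsub : vset C ⊆ vset {e} ∪ (vset C \ vset {e}) := by
    intro v hv
    by_cases h : v ∈ vset {e}
    · exact Finset.mem_union_left _ h
    · exact Finset.mem_union_right _ (Finset.mem_sdiff.2 ⟨hv, h⟩)
  have hinj : (vset C \ vset {e}).card ≤ (C.erase e).card := by
    apply Finset.card_le_card_of_injOn (minEdge U e)
    · intro v hv
      rw [Finset.mem_coe, Finset.mem_sdiff, mem_vset] at hv
      obtain ⟨⟨f, hf, hvf⟩, hv2⟩ := hv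
      have hne : ((comp U e).filter (fun f => v ∈ f)).Nonempty :=
        ⟨f, Finset.mem_filter.2 ⟨hf, hvf⟩⟩
      obtain ⟨h1, h2, _⟩ := minEdge_spec hne
      refine Finset.mem_erase.2 ⟨?_, h1⟩
      intro heq
      exact hv2 (mem_vset.2 ⟨e, Finset.mem_singleton_self e, heq ▸ h2⟩)
    · intro v hv w hw hvw
      by_contra hne
      rw [Finset.mem_coe, Finset.mem_sdiff, mem_vset] at hv hw
      obtain ⟨⟨f1, hf1, hvf1⟩, hv2⟩ := hv
      obtain ⟨⟨f2, hf2, hvf2⟩, hw2⟩ := hw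
      have hnev : ((comp U e).filter (fun f => v ∈ f)).Nonempty :=
        ⟨f1, Finset.mem_filter.2 ⟨hf1, hvf1⟩⟩
      have hnew : ((comp U e).filter (fun f => w ∈ f)).Nonempty :=
        ⟨f2, Finset.mem_filter.2 ⟨hf2, hvf2⟩⟩
      obtain ⟨hm1, hm2, hm3⟩ := minEdge_spec hnev
      obtain ⟨hm1', hm2', hm3'⟩ := minEdge_spec hnew
      set f := minEdge U e v with hfdef
      have hwf : w ∈ f := hvw ▸ hm2'
      have hfe : f ≠ e := by
        intro heq
        exact hv2 (mem_vset.2 ⟨e, Finset.mem_singleton_self e, heq ▸ hm2⟩)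
      obtain ⟨g, hg, hadj, hlt⟩ := exists_closer hm1 hfe
      obtain ⟨x, hxf, hxg⟩ := (adjE_symm hadj).2.2
      have hfvw : f = s(v, w) := sym2_eq_of_two_mem hne hm2 hwf
      have hx : x = v ∨ x = w := by
        rw [hfvw] at hxf; exact Sym2.mem_iff.1 hxf
      rcases hx with rfl | rfl
      · exact absurd (hm3 g hg hxg) (not_le.2 hlt)
      · have := hm3' g hg hxg
        rw [← hvw] at this
        exact absurd this (not_le.2 hlt)
  calc (vset C).card ≤ (vset {e} ∪ (vset C \ vset {e})).card := Finset.card_le_card hsub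
    _ ≤ (vset {e}).card + (vset C \ vset {e}).card := Finset.card_union_le _ _
    _ ≤ 2 + (C.erase e).card := Nat.add_le_add (card_vset_singleton_le e) hinj
    _ = 2 + (C.card - 1) := by rw [Finset.card_erase_of_mem (self_mem_comp he)]
    _ ≤ C.card + 1 := by
        have : 1 ≤ C.card := Finset.card_pos.2 ⟨e, self_mem_comp he⟩
        omega



/-- matching: non-diagonal, pairwise vertex-disjoint edges -/
def IsMat (s : Finset (Sym2 V)) : Prop :=
  (∀ e ∈ s, ¬ e.IsDiag) ∧ ∀ e ∈ s, ∀ f ∈ s, e ≠ f → ∀ v : V, v ∈ e → v ∉ f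

lemma IsMat.mono {s t : Finset (Sym2 V)} (h : IsMat t) (hsub : s ⊆ t) : IsMat s :=
  ⟨fun e he => h.1 e (hsub he), fun e he f hf => h.2 e (hsub he) f (hsub hf)⟩

lemma card_vset_two (e : Sym2 V) (h : ¬ e.IsDiag) : (vset {e}).card = 2 := by
  induction e with
  | _ a b =>
    have hab : a ≠ b := by simpa [Sym2.isDiag_iff_proj_eq] using h
    rw [vset_singleton]
    rw [Finset.card_insert_of_notMem (by simp [hab]), Finset.card_singleton]

lemma vset_eq_biUnion (s : Finset (Sym2 V)) : vset s = s.biUnion (fun e => vset {e}) := by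
  ext v
  simp [mem_vset]

lemma IsMat.card_vset {s : Finset (Sym2 V)} (h : IsMat s) : (vset s).card = 2 * s.card := by
  rw [vset_eq_biUnion, Finset.card_biUnion]
  · rw [Finset.sum_congr rfl (fun e he => card_vset_two e (h.1 e he))]
    simp [Nat.mul_comm]
  · intro e he f hf hef
    simp only [Finset.disjoint_left]
    intro v hv hv'
    rw [mem_vset] at hv hv'
    obtain ⟨e', he', hve⟩ := hv
    obtain ⟨f', hf', hvf⟩ := hv'
    rw [Finset.mem_singleton] at he' hf'
    exact h.2 e he f hf hef v (he' ▸ hve) (hf' ▸ hvf)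

lemma vset_mono {s t : Finset (Sym2 V)} (h : s ⊆ t) : vset s ⊆ vset t := by
  intro v hv
  rw [mem_vset] at hv ⊢
  obtain ⟨e, he, hve⟩ := hv
  exact ⟨e, h he, hve⟩

/-- union of component pieces is the component -/
lemma comp_eq_union_pieces {A B : Finset (Sym2 V)} {e : Sym2 V} (he : e ∈ A ∪ B) :
    (A ∩ comp (A ∪ B) e) ∪ (B ∩ comp (A ∪ B) e) = comp (A ∪ B) e := by
  ext f
  simp only [Finset.mem_union, Finset.mem_inter, mem_comp]
  constructor
  · rintro (⟨h1, h2⟩ | ⟨h1, h2⟩) <;> exact h2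
  · rintro ⟨h1, h2⟩
    rcases h1 with h | h
    · exact Or.inl ⟨h, Or.inl h, h2⟩
    · exact Or.inr ⟨h, Or.inr h, h2⟩

/-- surplus bound: within one component, matchings differ by at most one edge -/
lemma surplus_le {A B : Finset (Sym2 V)} (hA : IsMat A) (hB : IsMat B) {e : Sym2 V}
    (he : e ∈ A ∪ B) :
    (B ∩ comp (A ∪ B) e).card ≤ (A ∩ comp (A ∪ B) e).card + 1 := by
  set C := comp (A ∪ B) e with hC
  have h1 : 2 * (B ∩ C).card ≤ (vset C).card := by
    rw [← (hB.mono (Finset.inter_subset_left)).card_vset]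
    exact Finset.card_le_card (vset_mono (Finset.inter_subset_right))
  have h2 : (vset C).card ≤ C.card + 1 := card_vset_comp_le he
  have h3 : C.card ≤ (A ∩ C).card + (B ∩ C).card := by
    calc C.card = ((A ∩ C) ∪ (B ∩ C)).card := by rw [comp_eq_union_pieces he]
      _ ≤ _ := Finset.card_union_le _ _
  omega



lemma comp_subset {U : Finset (Sym2 V)} {e : Sym2 V} : comp U e ⊆ U :=
  Finset.filter_subset _ _

/-- the set of components -/
noncomputable def comps (U : Finset (Sym2 V)) : Finset (Finset (Sym2 V)) :=
  U.image (comp U)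

lemma comp_mem_comps {U : Finset (Sym2 V)} {e : Sym2 V} (he : e ∈ U) : comp U e ∈ comps U :=
  Finset.mem_image_of_mem _ he

lemma comps_disj {U : Finset (Sym2 V)} {C C' : Finset (Sym2 V)} (hC : C ∈ comps U)
    (hC' : C' ∈ comps U) (hne : C ≠ C') : Disjoint C C' := by
  obtain ⟨e, he, rfl⟩ := Finset.mem_image.1 hC
  obtain ⟨e', he', rfl⟩ := Finset.mem_image.1 hC'
  rw [Finset.disjoint_left]
  intro f hf hf'
  exact hne ((mem_comp_self_of_mem hf).trans (mem_comp_self_of_mem hf').symm)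

lemma comps_nonempty {U : Finset (Sym2 V)} {C : Finset (Sym2 V)} (hC : C ∈ comps U) :
    C.Nonempty := by
  obtain ⟨e, he, rfl⟩ := Finset.mem_image.1 hC
  exact ⟨e, self_mem_comp he⟩

lemma vset_comps_disj {U : Finset (Sym2 V)} {C C' : Finset (Sym2 V)} (hC : C ∈ comps U)
    (hC' : C' ∈ comps U) (hne : C ≠ C') : Disjoint (vset C) (vset C') := by
  obtain ⟨e, he, rfl⟩ := Finset.mem_image.1 hC
  obtain ⟨e', he', rfl⟩ := Finset.mem_image.1 hC'
  rw [Finset.disjoint_left]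
  intro v hv hv'
  obtain ⟨f, hf, hvf⟩ := mem_vset.1 hv
  obtain ⟨f', hf', hvf'⟩ := mem_vset.1 hv'
  have hadj : adjE U f f' := ⟨comp_subset hf, comp_subset hf', v, hvf, hvf'⟩
  have : f' ∈ comp U e := mem_comp_of_adj hf hadj
  exact hne ((mem_comp_self_of_mem this).trans (mem_comp_self_of_mem hf').symm)

/-- key of a component: its least vertex, as `WithBot V` -/
noncomputable def key (C : Finset (Sym2 V)) : WithBot V := (vset C).min

lemma key_ne_bot {U : Finset (Sym2 V)} {C : Finset (Sym2 V)} (hC : C ∈ comps U) :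
    key C ≠ ⊥ := by
  obtain ⟨e, he⟩ := comps_nonempty hC
  obtain ⟨v, w⟩ := e
  have : v ∈ vset C := mem_vset.2 ⟨s(v, w), he, by simp⟩
  obtain ⟨b, hb⟩ := Finset.min_of_mem this
  rw [key, hb]
  exact WithBot.coe_ne_bot

lemma key_injOn {U : Finset (Sym2 V)} {C C' : Finset (Sym2 V)} (hC : C ∈ comps U)
    (hC' : C' ∈ comps U) (h : key C = key C') : C = C' := by
  by_contra hne
  obtain ⟨v, hv⟩ := WithBot.ne_bot_iff_exists.1 (key_ne_bot hC)
  have h1 : v ∈ vset C := Finset.mem_of_min (show (vset C).min = ↑v from hv.symm)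
  have h2 : v ∈ vset C' := by
    apply Finset.mem_of_min
    show (vset C').min = ↑v
    have h' : (vset C).min = (vset C').min := h
    rw [← h']
    exact hv.symm
  exact Finset.disjoint_left.1 (vset_comps_disj hC hC' hne) h1 h2

/-- swapping the edges of a component between two matchings -/
noncomputable def swap (A B C : Finset (Sym2 V)) : Finset (Sym2 V) := (A \ C) ∪ (B ∩ C)

lemma swap_subset {A B C : Finset (Sym2 V)} : swap A B C ⊆ A ∪ B := by
  intro x hx
  rw [swap, Finset.mem_union] at hx
  rcases hx with h | h
  · exact Finset.mem_union_left _ (Finset.mem_sdiff.1 h).1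
  · exact Finset.mem_union_right _ (Finset.mem_inter.1 h).1

lemma swap_union_swap {A B C : Finset (Sym2 V)} : swap A B C ∪ swap B A C = A ∪ B := by
  ext x
  simp only [swap, Finset.mem_union, Finset.mem_sdiff, Finset.mem_inter]
  tauto

lemma swap_swap {A B C : Finset (Sym2 V)} :
    swap (swap A B C) (swap B A C) C = A := by
  ext x
  simp only [swap, Finset.mem_union, Finset.mem_sdiff, Finset.mem_inter]
  tauto

lemma swap_card {A B C : Finset (Sym2 V)} :
    (swap A B C).card + (A ∩ C).card = A.card + (B ∩ C).card := by
  have hdisj : Disjoint (A \ C) (B ∩ C) := by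
    rw [Finset.disjoint_left]
    intro x hx hx'
    exact (Finset.mem_sdiff.1 hx).2 (Finset.mem_inter.1 hx').2
  rw [swap, Finset.card_union_of_disjoint hdisj]
  have := Finset.card_sdiff_add_card_inter A C
  omega

/-- the swap of a component of `A ∪ B` is a matching -/
lemma swap_isMat {A B : Finset (Sym2 V)} (hA : IsMat A) (hB : IsMat B) {e : Sym2 V}
    (he : e ∈ A ∪ B) : IsMat (swap A B (comp (A ∪ B) e)) := by
  set C := comp (A ∪ B) e with hCdef
  constructor
  · intro f hf
    rcases Finset.mem_union.1 hf with h | h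
    · exact hA.1 f (Finset.mem_sdiff.1 h).1
    · exact hB.1 f (Finset.mem_inter.1 h).1
  · intro f hf g hg hfg v hvf hvg
    rcases Finset.mem_union.1 hf with h1 | h1 <;> rcases Finset.mem_union.1 hg with h2 | h2
    · exact hA.2 f (Finset.mem_sdiff.1 h1).1 g (Finset.mem_sdiff.1 h2).1 hfg v hvf hvg
    · -- f ∈ A \ C, g ∈ B ∩ C share v: then f ∈ C, contradiction
      obtain ⟨hfA, hfC⟩ := Finset.mem_sdiff.1 h1
      obtain ⟨hgB, hgC⟩ := Finset.mem_inter.1 h2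
      have hadj : adjE (A ∪ B) g f :=
        ⟨comp_subset hgC, Finset.mem_union_left _ hfA, v, hvg, hvf⟩
      exact hfC (mem_comp_of_adj hgC hadj)
    · obtain ⟨hfB, hfC⟩ := Finset.mem_inter.1 h1
      obtain ⟨hgA, hgC⟩ := Finset.mem_sdiff.1 h2
      have hadj : adjE (A ∪ B) f g :=
        ⟨comp_subset hfC, Finset.mem_union_left _ hgA, v, hvf, hvg⟩
      exact hgC (mem_comp_of_adj hfC hadj)
    · exact hB.2 f (Finset.mem_inter.1 h1).1 g (Finset.mem_inter.1 h2).1 hfg v hvf hvg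

lemma swap_inter_self {A B C : Finset (Sym2 V)} : swap A B C ∩ C = B ∩ C := by
  ext x
  simp only [swap, Finset.mem_union, Finset.mem_inter, Finset.mem_sdiff]
  tauto

lemma swap_inter_other {A B C C' : Finset (Sym2 V)} (h : Disjoint C C') :
    swap A B C ∩ C' = A ∩ C' := by
  ext x
  simp only [swap, Finset.mem_union, Finset.mem_inter, Finset.mem_sdiff]
  constructor
  · rintro ⟨h1 | h1, h2⟩
    · exact ⟨h1.1, h2⟩
    · exact absurd h2 (fun hx => Finset.disjoint_left.1 h h1.2 hx)
  · rintro ⟨h1, h2⟩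
    by_cases hx : x ∈ C
    · exact absurd h2 (fun h2 => Finset.disjoint_left.1 h hx h2)
    · exact ⟨Or.inl ⟨h1, hx⟩, h2⟩



instance : Fintype (WithBot V) := inferInstanceAs (Fintype (Option V))

/-- surplus of a component -/
noncomputable def sig (A B C : Finset (Sym2 V)) : ℤ :=
  ((B ∩ C).card : ℤ) - ((A ∩ C).card : ℤ)

/-- prefix sums of surpluses over components with key up to `w` -/
noncomputable def Sf (A B : Finset (Sym2 V)) (w : WithBot V) : ℤ :=
  ∑ C ∈ (comps (A ∪ B)).filter (fun C => key C ≤ w), sig A B C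

lemma Sf_bot (A B : Finset (Sym2 V)) : Sf A B ⊥ = 0 := by
  rw [Sf]
  have : (comps (A ∪ B)).filter (fun C => key C ≤ (⊥ : WithBot V)) = ∅ := by
    rw [Finset.filter_eq_empty_iff]
    intro C hC hle
    exact key_ne_bot hC (le_bot_iff.1 hle)
  rw [this, Finset.sum_empty]

lemma biUnion_comps (U : Finset (Sym2 V)) : (comps U).biUnion id = U := by
  ext f
  simp only [Finset.mem_biUnion, id]
  constructor
  · rintro ⟨C, hC, hf⟩
    obtain ⟨e, _, rfl⟩ := Finset.mem_image.1 hC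
    exact comp_subset hf
  · intro hf
    exact ⟨comp U f, comp_mem_comps hf, self_mem_comp hf⟩

lemma sum_inter_card (U s : Finset (Sym2 V)) (hs : s ⊆ U) :
    ∑ C ∈ comps U, ((s ∩ C).card : ℤ) = s.card := by
  have h1 : s = (comps U).biUnion (fun C => s ∩ C) := by
    ext f
    simp only [Finset.mem_biUnion, Finset.mem_inter]
    constructor
    · intro hf
      exact ⟨comp U f, comp_mem_comps (hs hf), hf, self_mem_comp (hs hf)⟩
    · rintro ⟨C, _, hf, _⟩
      exact hf
  have h2 : s.card = ∑ C ∈ comps U, (s ∩ C).card := by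
    conv_lhs => rw [h1]
    apply Finset.card_biUnion
    intro C hC C' hC' hne
    exact Finset.disjoint_of_subset_left Finset.inter_subset_right
      (Finset.disjoint_of_subset_right Finset.inter_subset_right (comps_disj hC hC' hne))
  rw [h2]
  push_cast
  rfl

lemma Sf_total {A B : Finset (Sym2 V)} {v : V} (hv : ∀ u : V, u ≤ v) :
    Sf A B ↑v = (B.card : ℤ) - A.card := by
  rw [Sf]
  have hfilter : (comps (A ∪ B)).filter (fun C => key C ≤ (v : WithBot V)) = comps (A ∪ B) := by
    rw [Finset.filter_eq_self]
    intro C hC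
    obtain ⟨u, hu⟩ := WithBot.ne_bot_iff_exists.1 (key_ne_bot hC)
    rw [← hu]
    exact_mod_cast hv u
  rw [hfilter]
  have h1 := sum_inter_card (A ∪ B) A Finset.subset_union_left
  have h2 := sum_inter_card (A ∪ B) B Finset.subset_union_right
  simp only [sig, Finset.sum_sub_distrib, h1, h2]

/-- minimum of the prefix sums -/
noncomputable def mval (A B : Finset (Sym2 V)) : ℤ :=
  ((Finset.univ : Finset (WithBot V)).image (Sf A B)).min'
    (Finset.Nonempty.image ⟨⊥, Finset.mem_univ _⟩ _)

lemma mval_le (A B : Finset (Sym2 V)) (w : WithBot V) : mval A B ≤ Sf A B w :=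
  Finset.min'_le _ _ (Finset.mem_image_of_mem _ (Finset.mem_univ w))

lemma mval_nonpos (A B : Finset (Sym2 V)) : mval A B ≤ 0 :=
  (Sf_bot A B) ▸ mval_le A B ⊥

lemma exists_mval (A B : Finset (Sym2 V)) : ∃ w, Sf A B w = mval A B := by
  obtain ⟨w, _, hw⟩ := Finset.mem_image.1 (Finset.min'_mem
    ((Finset.univ : Finset (WithBot V)).image (Sf A B))
    (Finset.Nonempty.image ⟨⊥, Finset.mem_univ _⟩ _))
  exact ⟨w, hw⟩

/-- last attainment of the minimum -/
noncomputable def pval (A B : Finset (Sym2 V)) : WithBot V :=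
  (Finset.univ.filter (fun w => Sf A B w = mval A B)).max' (by
    obtain ⟨w, hw⟩ := exists_mval A B
    exact ⟨w, Finset.mem_filter.2 ⟨Finset.mem_univ _, hw⟩⟩)

lemma Sf_pval (A B : Finset (Sym2 V)) : Sf A B (pval A B) = mval A B := by
  have := Finset.max'_mem (Finset.univ.filter (fun w => Sf A B w = mval A B)) (by
    obtain ⟨w, hw⟩ := exists_mval A B
    exact ⟨w, Finset.mem_filter.2 ⟨Finset.mem_univ _, hw⟩⟩)
  exact (Finset.mem_filter.1 this).2

lemma le_pval {A B : Finset (Sym2 V)} {w : WithBot V} (h : Sf A B w = mval A B) :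
    w ≤ pval A B := by
  apply Finset.le_max'
  exact Finset.mem_filter.2 ⟨Finset.mem_univ _, h⟩

lemma Sf_gt_of_gt_pval {A B : Finset (Sym2 V)} {w : WithBot V} (h : pval A B < w) :
    mval A B + 1 ≤ Sf A B w := by
  have h1 := mval_le A B w
  rcases eq_or_lt_of_le h1 with heq | hlt
  · exact absurd (le_pval heq.symm) (not_le.2 h)
  · omega

/-- candidate components to swap -/
noncomputable def swapCands (A B : Finset (Sym2 V)) : Finset (Finset (Sym2 V)) :=
  (comps (A ∪ B)).filter (fun C => sig A B C ≠ 0 ∧ pval A B < key C)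

/-- the component chosen for the swap -/
noncomputable def swapComp (A B : Finset (Sym2 V)) : Finset (Sym2 V) :=
  if h : (swapCands A B).Nonempty then (Finset.exists_min_image _ key h).choose else ∅

lemma swapComp_spec {A B : Finset (Sym2 V)} (h : (swapCands A B).Nonempty) :
    swapComp A B ∈ swapCands A B ∧ ∀ C ∈ swapCands A B, key (swapComp A B) ≤ key C := by
  rw [swapComp, dif_pos h]
  exact (Finset.exists_min_image (swapCands A B) key h).choose_spec



lemma le_coe_max (vmax : V) (hv : ∀ u : V, u ≤ vmax) (w : WithBot V) : w ≤ (vmax : WithBot V) := by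
  induction w with
  | bot => exact bot_le
  | coe u => exact WithBot.coe_le_coe.2 (hv u)

lemma swapCands_nonempty {A B : Finset (Sym2 V)} (hcard : B.card = A.card + 2) :
    (swapCands A B).Nonempty := by
  -- V is nonempty since B is
  have hBne : B.Nonempty := Finset.card_pos.1 (by omega)
  obtain ⟨e, he⟩ := hBne
  have hVne : Nonempty V := by
    obtain ⟨v, _⟩ := e
    exact ⟨v⟩
  have huniv : (Finset.univ : Finset V).Nonempty := Finset.univ_nonempty
  set vmax := Finset.univ.max' huniv with hvm
  have hmax : ∀ u : V, u ≤ vmax := fun u => Finset.le_max' _ _ (Finset.mem_univ u)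
  have htot : Sf A B ↑vmax = 2 := by
    rw [Sf_total hmax, hcard]
    push_cast
    ring
  by_contra hempty
  rw [Finset.not_nonempty_iff_eq_empty] at hempty
  have hzero : ∀ C ∈ comps (A ∪ B), ¬ key C ≤ pval A B → sig A B C = 0 := by
    intro C hC hgt
    by_contra hs
    have : C ∈ swapCands A B :=
      Finset.mem_filter.2 ⟨hC, hs, not_le.1 hgt⟩
    rw [hempty] at this
    exact absurd this (Finset.notMem_empty C)
  have hsub : (comps (A ∪ B)).filter (fun C => key C ≤ pval A B) ⊆
      (comps (A ∪ B)).filter (fun C => key C ≤ (vmax : WithBot V)) := by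
    intro C hC
    rw [Finset.mem_filter] at hC ⊢
    exact ⟨hC.1, le_coe_max vmax hmax _⟩
  have heq : Sf A B ↑vmax = Sf A B (pval A B) := by
    rw [Sf, Sf]
    apply (Finset.sum_subset hsub ?_).symm
    intro C hC hCn
    rw [Finset.mem_filter] at hC
    rw [Finset.mem_filter, not_and] at hCn
    exact hzero C hC.1 (hCn hC.1)
  rw [htot, Sf_pval] at heq
  have := mval_nonpos A B
  omega

lemma sig_bounds {A B : Finset (Sym2 V)} (hA : IsMat A) (hB : IsMat B) {C : Finset (Sym2 V)}
    (hC : C ∈ comps (A ∪ B)) : -1 ≤ sig A B C ∧ sig A B C ≤ 1 := by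
  obtain ⟨e, he, rfl⟩ := Finset.mem_image.1 hC
  have h1 := surplus_le hA hB he
  have h2 := surplus_le hB hA (by rwa [Finset.union_comm])
  rw [Finset.union_comm B A] at h2
  rw [sig]
  constructor
  · have := h2
    push_cast
    omega
  · push_cast
    omega

lemma swapComp_props {A B : Finset (Sym2 V)} (hA : IsMat A) (hB : IsMat B)
    (hcard : B.card = A.card + 2) :
    swapComp A B ∈ comps (A ∪ B) ∧ sig A B (swapComp A B) = 1 ∧
      pval A B < key (swapComp A B) ∧ Sf A B (key (swapComp A B)) = mval A B + 1 := by
  obtain ⟨hmem, hmin⟩ := swapComp_spec (swapCands_nonempty hcard)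
  set c₀ := swapComp A B
  rw [swapCands, Finset.mem_filter] at hmem
  obtain ⟨hcomps, hsig, hp⟩ := hmem
  have hkey : Sf A B (key c₀) = mval A B + sig A B c₀ := by
    have hsub : (comps (A ∪ B)).filter (fun C => key C ≤ pval A B) ⊆
        (comps (A ∪ B)).filter (fun C => key C ≤ key c₀) := by
      intro C hC
      rw [Finset.mem_filter] at hC ⊢
      exact ⟨hC.1, hC.2.trans hp.le⟩
    have hsd := Finset.sum_sdiff (f := sig A B) hsub
    have hsingle : ∑ C ∈ (comps (A ∪ B)).filter (fun C => key C ≤ key c₀) \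
        (comps (A ∪ B)).filter (fun C => key C ≤ pval A B), sig A B C = sig A B c₀ := by
      apply Finset.sum_eq_single_of_mem
      · rw [Finset.mem_sdiff, Finset.mem_filter, Finset.mem_filter]
        exact ⟨⟨hcomps, le_refl _⟩, fun h => absurd h.2 (not_le.2 hp)⟩
      · intro C hC hne
        rw [Finset.mem_sdiff, Finset.mem_filter, Finset.mem_filter] at hC
        obtain ⟨⟨hC1, hC2⟩, hC3⟩ := hC
        by_contra hs
        have hCc : C ∈ swapCands A B :=
          Finset.mem_filter.2 ⟨hC1, hs, not_le.1 (fun h => hC3 ⟨hC1, h⟩)⟩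
        have := hmin C hCc
        exact hne (key_injOn hC1 hcomps (le_antisymm hC2 this))
    unfold Sf
    rw [← hsd, hsingle]
    have hSp := Sf_pval A B
    unfold Sf at hSp
    rw [hSp]
    ring
  obtain ⟨hlb, hub⟩ := sig_bounds hA hB hcomps
  have hge := mval_le A B (key c₀)
  have hsig1 : sig A B c₀ = 1 := by omega
  exact ⟨hcomps, hsig1, hp, by rw [hkey, hsig1]⟩



/-- first attainment of the minimum -/
noncomputable def wmin (A B : Finset (Sym2 V)) : WithBot V :=
  (Finset.univ.filter (fun w => Sf A B w = mval A B)).min' (by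
    obtain ⟨w, hw⟩ := exists_mval A B
    exact ⟨w, Finset.mem_filter.2 ⟨Finset.mem_univ _, hw⟩⟩)

section SwapAnalysis

variable {A B : Finset (Sym2 V)} (hA : IsMat A) (hB : IsMat B)
  (hcard : B.card = A.card + 2)

lemma sig_swap (hA : IsMat A) (hB : IsMat B) (hcard : B.card = A.card + 2)
    {C : Finset (Sym2 V)} (hC : C ∈ comps (A ∪ B)) :
    sig (swap A B (swapComp A B)) (swap B A (swapComp A B)) C =
      if C = swapComp A B then - sig A B C else sig A B C := by
  obtain ⟨hc₀, hsig1, hp, hkey⟩ := swapComp_props hA hB hcard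
  set c₀ := swapComp A B
  by_cases h : C = c₀
  · subst h
    rw [if_pos rfl, sig, sig, swap_inter_self, swap_inter_self]
    ring
  · have hdisj : Disjoint c₀ C := comps_disj hc₀ hC (fun heq => h heq.symm)
    rw [if_neg h, sig, sig, swap_inter_other hdisj, swap_inter_other hdisj]

lemma Sf_swap (hA : IsMat A) (hB : IsMat B) (hcard : B.card = A.card + 2) (w : WithBot V) :
    Sf (swap A B (swapComp A B)) (swap B A (swapComp A B)) w =
      Sf A B w - (if key (swapComp A B) ≤ w then 2 else 0) := by
  obtain ⟨hc₀, hsig1, hp, hkey⟩ := swapComp_props hA hB hcard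
  set c₀ := swapComp A B
  have hU : swap A B c₀ ∪ swap B A c₀ = A ∪ B := swap_union_swap
  unfold Sf
  rw [hU]
  have hsplit : ∀ C ∈ (comps (A ∪ B)).filter (fun C => key C ≤ w),
      sig (swap A B c₀) (swap B A c₀) C =
        sig A B C + (if C = c₀ then -2 else 0) := by
    intro C hC
    rw [Finset.mem_filter] at hC
    rw [sig_swap hA hB hcard hC.1]
    by_cases h : C = c₀
    · subst h
      rw [if_pos rfl, if_pos rfl, hsig1]
      ring
    · rw [if_neg h, if_neg h]
      ring
  rw [Finset.sum_congr rfl hsplit, Finset.sum_add_distrib]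
  congr 1
  rw [Finset.sum_ite_eq' ((comps (A ∪ B)).filter (fun C => key C ≤ w)) c₀ (fun _ => (-2 : ℤ))]
  by_cases hcw : key c₀ ≤ w
  · rw [if_pos hcw, if_pos (Finset.mem_filter.2 ⟨hc₀, hcw⟩)]
  · rw [if_neg hcw, if_neg (show c₀ ∉ (comps (A ∪ B)).filter (fun C => key C ≤ w) from
      fun h => hcw (Finset.mem_filter.1 h).2)]
    ring

lemma wmin_swap (hA : IsMat A) (hB : IsMat B) (hcard : B.card = A.card + 2) :
    wmin (swap A B (swapComp A B)) (swap B A (swapComp A B)) = key (swapComp A B) ∧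
    mval (swap A B (swapComp A B)) (swap B A (swapComp A B)) = mval A B - 1 := by
  obtain ⟨hc₀, hsig1, hp, hkey⟩ := swapComp_props hA hB hcard
  set c₀ := swapComp A B
  set A' := swap A B c₀
  set B' := swap B A c₀
  have hSf' := Sf_swap hA hB hcard
  have hlow : ∀ w : WithBot V, mval A B - 1 ≤ Sf A' B' w := by
    intro w
    rw [hSf' w]
    by_cases h : key c₀ ≤ w
    · rw [if_pos h]
      have := Sf_gt_of_gt_pval (lt_of_lt_of_le hp h)
      omega
    · rw [if_neg h]
      have := mval_le A B w
      omega
  have hattain : Sf A' B' (key c₀) = mval A B - 1 := by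
    rw [hSf' (key c₀), if_pos (le_refl _), hkey]
    ring
  have hmval : mval A' B' = mval A B - 1 := by
    apply le_antisymm
    · rw [← hattain]
      exact mval_le A' B' (key c₀)
    · obtain ⟨w, hw⟩ := exists_mval A' B'
      rw [← hw]
      exact hlow w
  have hstrict : ∀ w : WithBot V, Sf A' B' w = mval A' B' → key c₀ ≤ w := by
    intro w hw
    by_contra h
    rw [hSf' w, if_neg h] at hw
    have := mval_le A B w
    rw [hmval] at hw
    omega
  constructor
  · apply le_antisymm
    · apply Finset.min'_le
      exact Finset.mem_filter.2 ⟨Finset.mem_univ _, by rw [hattain, hmval]⟩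
    · apply Finset.le_min'
      intro w hw
      exact hstrict w (Finset.mem_filter.1 hw).2
  · exact hmval

end SwapAnalysis

noncomputable def matchCount' {V : Type} [Fintype V] (G : SimpleGraph V) (k : ℕ) : ℕ :=
  ((G.edgeFinset.powersetCard k).filter
    (fun s => ∀ e ∈ s, ∀ f ∈ s, e ≠ f → ∀ v : V, v ∈ e → v ∉ f)).card

noncomputable def Mset {V : Type} [Fintype V] (G : SimpleGraph V) (k : ℕ) :
    Finset (Finset (Sym2 V)) :=
  (G.edgeFinset.powersetCard k).filter
    (fun s => ∀ e ∈ s, ∀ f ∈ s, e ≠ f → ∀ v : V, v ∈ e → v ∉ f)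

lemma matchCount'_eq {V : Type} [Fintype V] (G : SimpleGraph V) (k : ℕ) :
    matchCount' G k = (Mset G k).card := rfl

lemma mem_Mset {V : Type} [Fintype V] {G : SimpleGraph V} {k : ℕ} {s : Finset (Sym2 V)} :
    s ∈ Mset G k ↔ s ⊆ G.edgeFinset ∧ s.card = k ∧ IsMat s := by
  rw [Mset, Finset.mem_filter, Finset.mem_powersetCard]
  constructor
  · rintro ⟨⟨h1, h2⟩, h3⟩
    refine ⟨h1, h2, ?_, h3⟩
    intro e he
    exact SimpleGraph.not_isDiag_of_mem_edgeSet G (SimpleGraph.mem_edgeFinset.1 (h1 he))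
  · rintro ⟨h1, h2, h3, h4⟩
    exact ⟨⟨h1, h2⟩, h4⟩

section Inj

variable {V : Type} [Fintype V] [LinearOrder V] {G : SimpleGraph V}

lemma sig_nat {A B : Finset (Sym2 V)} (hA : IsMat A) (hB : IsMat B)
    (hcard : B.card = A.card + 2) :
    (B ∩ swapComp A B).card = (A ∩ swapComp A B).card + 1 := by
  have h := (swapComp_props hA hB hcard).2.1
  rw [sig] at h
  omega

lemma phi_mem {k : ℕ} {A B : Finset (Sym2 V)} (hA : A ∈ Mset G k) (hB : B ∈ Mset G (k + 2)) :
    swap A B (swapComp A B) ∈ Mset G (k + 1) ∧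
    swap B A (swapComp A B) ∈ Mset G (k + 1) := by
  obtain ⟨hA1, hA2, hA3⟩ := mem_Mset.1 hA
  obtain ⟨hB1, hB2, hB3⟩ := mem_Mset.1 hB
  have hcard : B.card = A.card + 2 := by omega
  obtain ⟨hc₀, hsig1, hp, hkey⟩ := swapComp_props hA3 hB3 hcard
  have hnat := sig_nat hA3 hB3 hcard
  set c₀ := swapComp A B
  obtain ⟨e, he, heq⟩ := Finset.mem_image.1 hc₀
  have hsub : A ∪ B ⊆ G.edgeFinset := Finset.union_subset hA1 hB1
  have hcardA := swap_card (A := A) (B := B) (C := c₀)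
  have hcardB := swap_card (A := B) (B := A) (C := c₀)
  have hiA : (A ∩ c₀).card ≤ A.card := Finset.card_le_card Finset.inter_subset_left
  have hiB : (B ∩ c₀).card ≤ B.card := Finset.card_le_card Finset.inter_subset_left
  refine ⟨mem_Mset.2 ⟨?_, ?_, ?_⟩, mem_Mset.2 ⟨?_, ?_, ?_⟩⟩
  · exact (swap_subset).trans hsub
  · omega
  · rw [← heq]
    exact swap_isMat hA3 hB3 he
  · intro x hx
    apply hsub
    rw [Finset.union_comm]
    exact swap_subset hx
  · omega
  · have he' : e ∈ B ∪ A := by rwa [Finset.union_comm]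
    have : comp (B ∪ A) e = c₀ := by rw [Finset.union_comm, heq]
    rw [← this]
    exact swap_isMat hB3 hA3 he'

lemma phi_injective {k : ℕ} {A₁ B₁ A₂ B₂ : Finset (Sym2 V)}
    (hA₁ : A₁ ∈ Mset G k) (hB₁ : B₁ ∈ Mset G (k + 2))
    (hA₂ : A₂ ∈ Mset G k) (hB₂ : B₂ ∈ Mset G (k + 2))
    (heq1 : swap A₁ B₁ (swapComp A₁ B₁) = swap A₂ B₂ (swapComp A₂ B₂))
    (heq2 : swap B₁ A₁ (swapComp A₁ B₁) = swap B₂ A₂ (swapComp A₂ B₂)) :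
    A₁ = A₂ ∧ B₁ = B₂ := by
  obtain ⟨hA11, hA12, hA13⟩ := mem_Mset.1 hA₁
  obtain ⟨hB11, hB12, hB13⟩ := mem_Mset.1 hB₁
  obtain ⟨hA21, hA22, hA23⟩ := mem_Mset.1 hA₂
  obtain ⟨hB21, hB22, hB23⟩ := mem_Mset.1 hB₂
  have hc1 : B₁.card = A₁.card + 2 := by omega
  have hc2 : B₂.card = A₂.card + 2 := by omega
  set c₁ := swapComp A₁ B₁
  set c₂ := swapComp A₂ B₂
  have hU : A₁ ∪ B₁ = A₂ ∪ B₂ := by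
    rw [← swap_union_swap (A := A₁) (B := B₁) (C := c₁),
      ← swap_union_swap (A := A₂) (B := B₂) (C := c₂), heq1, heq2]
  have hw1 := wmin_swap hA13 hB13 hc1
  have hw2 := wmin_swap hA23 hB23 hc2
  have hkeys : key c₁ = key c₂ := by
    rw [← hw1.1, ← hw2.1, heq1, heq2]
  have hc₁m : c₁ ∈ comps (A₁ ∪ B₁) := (swapComp_props hA13 hB13 hc1).1
  have hc₂m : c₂ ∈ comps (A₁ ∪ B₁) := by
    rw [hU]
    exact (swapComp_props hA23 hB23 hc2).1
  have hcc : c₁ = c₂ := key_injOn hc₁m hc₂m hkeys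
  constructor
  · rw [← swap_swap (A := A₁) (B := B₁) (C := c₁), heq1, heq2, hcc,
      swap_swap]
  · rw [← swap_swap (A := B₁) (B := A₁) (C := c₁), heq1, heq2, hcc,
      swap_swap]

/-- LOG-CONCAVITY of the matching numbers -/
lemma matchCount'_lc (G : SimpleGraph V) (k : ℕ) :
    matchCount' G k * matchCount' G (k + 2) ≤ matchCount' G (k + 1) * matchCount' G (k + 1) := by
  rw [matchCount'_eq, matchCount'_eq, matchCount'_eq, ← Finset.card_product, ← Finset.card_product]
  apply Finset.card_le_card_of_injOn
    (fun p => (swap p.1 p.2 (swapComp p.1 p.2), swap p.2 p.1 (swapComp p.1 p.2)))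
  · rintro ⟨A, B⟩ hp
    rw [Finset.mem_coe, Finset.mem_product] at hp ⊢
    exact phi_mem hp.1 hp.2
  · rintro ⟨A₁, B₁⟩ hp1 ⟨A₂, B₂⟩ hp2 heq
    rw [Finset.mem_coe, Finset.mem_product] at hp1 hp2
    rw [Prod.mk.injEq] at heq
    obtain ⟨h1, h2⟩ := phi_injective hp1.1 hp1.2 hp2.1 hp2.2 heq.1 heq.2
    rw [Prod.mk.injEq]
    exact ⟨h1, h2⟩

end Inj

section Final

variable {V : Type} [Fintype V]

lemma matchCount'_lc' (G : SimpleGraph V) (k : ℕ) :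
    matchCount' G k * matchCount' G (k + 2) ≤ matchCount' G (k + 1) * matchCount' G (k + 1) := by
  letI : LinearOrder V := LinearOrder.lift' (Fintype.equivFin V) (Equiv.injective _)
  exact matchCount'_lc G k

lemma matchCount'_zero (G : SimpleGraph V) (k : ℕ) (h : matchCount' G k = 0) :
    matchCount' G (k + 1) = 0 := by
  letI : LinearOrder V := LinearOrder.lift' (Fintype.equivFin V) (Equiv.injective _)
  rw [matchCount'_eq, Finset.card_eq_zero] at h ⊢
  rw [Finset.eq_empty_iff_forall_notMem] at h ⊢
  intro s hs
  obtain ⟨hs1, hs2, hs3⟩ := mem_Mset.1 hs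
  obtain ⟨t, ht, htc⟩ := Finset.exists_subset_card_eq (s := s) (n := k) (by omega)
  exact h t (mem_Mset.2 ⟨ht.trans hs1, htc, hs3.mono ht⟩)

/-- abstract unimodality from log-concavity + no internal zeros -/
lemma unimodal_of_lc (f : ℕ → ℕ)
    (hlc : ∀ k, f k * f (k + 2) ≤ f (k + 1) * f (k + 1))
    (hzero : ∀ k, f k = 0 → f (k + 1) = 0) (n2 : ℕ) :
    ∃ k₀ ≤ n2, (∀ i j : ℕ, i < j → j ≤ k₀ → f i ≤ f j) ∧
      (∀ i j : ℕ, k₀ ≤ i → i < j → j ≤ n2 → f j ≤ f i) := by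
  have hstep : ∀ a, f (a + 1) ≤ f a → f (a + 2) ≤ f (a + 1) := by
    intro a h
    rcases Nat.eq_zero_or_pos (f (a + 1)) with h0 | hpos
    · rw [hzero (a + 1) h0]
      exact Nat.zero_le _
    · have h1 : f (a + 1) * f (a + 2) ≤ f (a + 1) * f (a + 1) := by
        calc f (a + 1) * f (a + 2) ≤ f a * f (a + 2) := Nat.mul_le_mul_right _ h
          _ ≤ f (a + 1) * f (a + 1) := hlc a
      exact Nat.le_of_mul_le_mul_left h1 hpos
  have hdown : ∀ a, f (a + 1) ≤ f a → ∀ m, f (a + m + 1) ≤ f (a + m) := by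
    intro a h m
    induction m with
    | zero => exact h
    | succ m ih => exact hstep (a + m) ih
  have hanti : ∀ a, f (a + 1) ≤ f a → ∀ m, f (a + m) ≤ f a := by
    intro a h m
    induction m with
    | zero => exact le_refl _
    | succ m ih => exact (hdown a h m).trans ih
  obtain ⟨k₀, hk₀S, hk₀max⟩ := Finset.exists_max_image (Finset.range (n2 + 1)) f
    ⟨0, Finset.mem_range.2 (by omega)⟩
  rw [Finset.mem_range] at hk₀S
  have hmax : ∀ j, j ≤ n2 → f j ≤ f k₀ := fun j hj =>
    hk₀max j (Finset.mem_range.2 (by omega))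
  have hk₀ : k₀ ≤ n2 := by omega
  refine ⟨k₀, hk₀, ?_, ?_⟩
  · -- increasing part
    have hmono : ∀ k, k < k₀ → f k ≤ f (k + 1) := by
      intro k hk
      by_contra hlt
      push_neg at hlt
      -- then f is nonincreasing from k+1 on, so f k₀ ≤ f (k+1) < f k ≤ f k₀
      have h1 : f (k + 1 + (k₀ - (k + 1))) ≤ f (k + 1) := by
        apply hanti
        exact hstep k hlt.le
      rw [show k + 1 + (k₀ - (k + 1)) = k₀ by omega] at h1
      have h2 : f k ≤ f k₀ := hmax k (by omega)
      omega
    intro i j hij hjk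
    have : ∀ d i', i' + d ≤ k₀ → f i' ≤ f (i' + d) := by
      intro d
      induction d with
      | zero => intro i' _; exact le_refl _
      | succ d ih =>
        intro i' h
        calc f i' ≤ f (i' + 1) := hmono i' (by omega)
          _ ≤ f (i' + 1 + d) := ih (i' + 1) (by omega)
          _ = f (i' + (d + 1)) := by ring_nf
    have := this (j - i) i (by omega)
    rwa [show i + (j - i) = j by omega] at this
  · -- decreasing part
    intro i j hki hij hjn
    have hstart : f (k₀ + 1) ≤ f k₀ := hmax (k₀ + 1) (by omega)
    have hnil : ∀ m, f (k₀ + m + 1) ≤ f (k₀ + m) := hdown k₀ hstart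
    -- f is nonincreasing from k₀ on
    have hanti2 : ∀ a b, k₀ ≤ a → a ≤ b → f b ≤ f a := by
      intro a b ha hab
      have h1 : ∀ m, f (a + m) ≤ f a := by
        intro m
        induction m with
        | zero => exact le_refl _
        | succ m ih =>
          have := hnil (a - k₀ + m)
          rw [show k₀ + (a - k₀ + m) = a + m by omega] at this
          rw [show a + m + 1 = a + (m + 1) by omega] at this
          exact this.trans ih
      have := h1 (b - a)
      rwa [show a + (b - a) = b by omega] at this
    exact hanti2 i j hki hij.le

end Final

end MatchLC


/-- for every finite simple graph `G` on `n` vertices, the sequence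
`m_0(G), m_1(G), …, m_{⌊n/2⌋}(G)` of numbers of `k`-matchings is unimodal. -/
theorem matchCount_unimodal {V : Type} [Fintype V] (G : SimpleGraph V) :
    ∃ k₀ ≤ Fintype.card V / 2,
      (∀ i j : ℕ, i < j → j ≤ k₀ → matchCount G i ≤ matchCount G j) ∧
      (∀ i j : ℕ, k₀ ≤ i → i < j → j ≤ Fintype.card V / 2 →
        matchCount G j ≤ matchCount G i) := by
  have h : ∀ k, matchCount G k = MatchLC.matchCount' G k := fun k => rfl
  obtain ⟨k₀, h1, h2, h3⟩ := MatchLC.unimodal_of_lc (matchCount G)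
    (fun k => by rw [h, h, h]; exact MatchLC.matchCount'_lc' G k)
    (fun k hk => by rw [h] at hk ⊢; exact MatchLC.matchCount'_zero G k hk)
    (Fintype.card V / 2)
  exact ⟨k₀, h1, h2, h3⟩
end
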